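/- arXiv:2104.12423 — 2 statements merged into one kernel-verified Lean document; each statement's English description precedes it below -/
import Mathlib

section
/- Let f ∈ C^α_loc(ℝ^d) with α > d/2 (in particular any f ∈ C^d(ℝ^d)), and let δ₀ ∈ C^{−d}(ℝ^d) be the Dirac delta distribution centered at the origin. Then the canonical product f·δ₀ ∈ D'(ℝ^d) exists, is given by (f·δ₀)(φ) = δ₀(fφ) for every test function φ, and equals f(0)δ₀. -/
open MeasureTheory Real Set Filter Metric
open scoped ENNReal NNReal Topology BigOperators

noncomputable section

/-- Euclidean space `ℝ^d`. -/
abbrev Ed (d : ℕ) := EuclideanSpace ℝ (Fin d)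

/-- A (model for a) distribution on `ℝ^d`: a linear functional on functions,
whose relevant values are those on test functions. -/
abbrev Distr (d : ℕ) := (Ed d → ℝ) →ₗ[ℝ] ℝ

variable {d : ℕ}

/-- A test function: smooth and compactly supported. -/
def IsTestFunction (φ : Ed d → ℝ) : Prop :=
  ContDiff ℝ (⊤ : ℕ∞) φ ∧ HasCompactSupport φ

/-- The scaled and translated test function `φ^λ_x(y) = λ^{-d} φ((x - y)/λ)`. -/
def scaleTF (φ : Ed d → ℝ) (x : Ed d) (l : ℝ) : Ed d → ℝ :=
  fun y => l ^ (-(d : ℤ)) * φ (l⁻¹ • (x - y))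

/-- The scaling `f^λ_{x₀}(y) = λ^{-d} f(λ⁻¹ (y - x₀))` used for the scaling degree. -/
def sdScaleFun (f : Ed d → ℝ) (x₀ : Ed d) (l : ℝ) : Ed d → ℝ :=
  fun y => l ^ (-(d : ℤ)) * f (l⁻¹ • (y - x₀))

/-- `⌊α⌋ = max {n : ℤ | n < α}`. -/
def lfloor (α : ℝ) : ℤ := ⌈α⌉ - 1

/-- The class `B^r` of test functions supported in the unit ball with `C^r`-norm at most 1. -/
def InBr (r : ℕ) (φ : Ed d → ℝ) : Prop :=
  IsTestFunction φ ∧ tsupport φ ⊆ Metric.ball (0 : Ed d) 1 ∧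
    ∀ k ≤ r, ∀ x, ‖iteratedFDeriv ℝ k φ x‖ ≤ 1

/-- The class `B^r_m` of elements of `B^r` whose moments of order `≤ m` vanish. -/
def InBrM (r : ℕ) (m : ℤ) (φ : Ed d → ℝ) : Prop :=
  InBr r φ ∧ ∀ k : Fin d → ℕ, ((∑ i, k i : ℤ) ≤ m) →
    (∫ x : Ed d, (∏ i, x i ^ k i) * φ x) = 0

/-- Taylor polynomial of order `n` of `f` centered at `x`, evaluated at `y`. -/
def taylorPoly (f : Ed d → ℝ) (x y : Ed d) (n : ℕ) : ℝ :=
  ∑ k ∈ Finset.range (n + 1),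
    ((k.factorial : ℝ))⁻¹ * iteratedFDeriv ℝ k f x (fun _ => y - x)

/-- Local Hölder regularity `C^α_loc` for functions, `α > 0`. -/
def HolderFunLoc (α : ℝ) (f : Ed d → ℝ) : Prop :=
  ContDiff ℝ ((lfloor α).toNat : ℕ∞) f ∧
    ∀ K : Set (Ed d), IsCompact K → ∃ C : ℝ, ∀ x ∈ K, ∀ y ∈ K,
      |f y - taylorPoly f x y (lfloor α).toNat| ≤ C * ‖x - y‖ ^ α

/-- Hölder regularity `C^β` (uniformly on every compact) for distributions, `β < 0`. -/
def HolderDistOn (u : Distr d) (β : ℝ) : Prop :=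
  ∀ K : Set (Ed d), IsCompact K → ∃ C : ℝ, ∀ x ∈ K, ∀ l ∈ Set.Ioc (0 : ℝ) 1,
    ∀ φ : Ed d → ℝ, InBr (-(lfloor β)).toNat φ → |u (scaleTF φ x l)| ≤ C * l ^ β

/-- Membership of a distribution in `C^α_loc` for a general real `α`. -/
def MemHolderLoc (u : Distr d) (α : ℝ) : Prop :=
  (0 < α → ∃ f : Ed d → ℝ, HolderFunLoc α f ∧
      ∀ ψ, IsTestFunction ψ → u ψ = ∫ x, f x * ψ x) ∧
  (α ≤ 0 → HolderDistOn u α)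

/-- Hölder seminorm `‖f‖_{C^α(K)}` for `α > 0`. -/
def holderPosSeminorm (f : Ed d → ℝ) (α : ℝ) (K : Set (Ed d)) : ℝ :=
  max (sSup {v : ℝ | ∃ k ≤ (lfloor α).toNat, ∃ x ∈ K, v = ‖iteratedFDeriv ℝ k f x‖})
      (sSup {v : ℝ | ∃ x ∈ K, ∃ y ∈ K,
        v = |f y - taylorPoly f x y (lfloor α).toNat| / ‖x - y‖ ^ α})

/-- Hölder seminorm `‖u‖_{C^β(K)}` for `β < 0`. -/
def holderNegSeminorm (u : Distr d) (β : ℝ) (K : Set (Ed d)) : ℝ :=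
  sSup {v : ℝ | ∃ x ∈ K, ∃ l ∈ Set.Ioc (0 : ℝ) 1, ∃ φ, InBr (-(lfloor β)).toNat φ ∧
    v = |u (scaleTF φ x l)| / l ^ β}

/-- `L^p`-type quantity (in `ℝ≥0∞`) of `g` on a set `K`. -/
def lpOn (p : ℝ≥0∞) (K : Set (Ed d)) (g : Ed d → ℝ≥0∞) : ℝ≥0∞ :=
  if p = ∞ then essSup g (volume.restrict K)
  else (∫⁻ x in K, g x ^ p.toReal) ^ (1 / p.toReal)

/-- `ℓ^q`-type quantity (in `ℝ≥0∞`) of a sequence. -/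
def lqSeq (q : ℝ≥0∞) (a : ℕ → ℝ≥0∞) : ℝ≥0∞ :=
  if q = ∞ then ⨆ n, a n else (∑' n, a n ^ q.toReal) ^ (1 / q.toReal)

/-- The Besov integrand `sup_{ψ ∈ B^r} |u(ψ^{2^{-n}}_x)| / 2^{-nγ}` for negative regularity. -/
def besovTermNeg (u : Distr d) (γ : ℝ) (r : ℕ) (n : ℕ) (x : Ed d) : ℝ≥0∞ :=
  ⨆ φ ∈ {φ : Ed d → ℝ | InBr r φ},
    ENNReal.ofReal (|u (scaleTF φ x ((2 : ℝ) ^ (-(n : ℤ))))| * (2 : ℝ) ^ ((n : ℝ) * γ))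

/-- The Besov integrand `sup_{ψ ∈ B^r_{⌊α⌋}} |u(ψ^{2^{-n}}_x)| / 2^{-nα}`. -/
def besovTermPos (u : Distr d) (α : ℝ) (r : ℕ) (n : ℕ) (x : Ed d) : ℝ≥0∞ :=
  ⨆ φ ∈ {φ : Ed d → ℝ | InBrM r (lfloor α) φ},
    ENNReal.ofReal (|u (scaleTF φ x ((2 : ℝ) ^ (-(n : ℤ))))| * (2 : ℝ) ^ ((n : ℝ) * α))

/-- The Besov integrand `sup_{ψ ∈ B^r} |u(ψ_x)|`. -/
def besovTermUnit (u : Distr d) (r : ℕ) (x : Ed d) : ℝ≥0∞ :=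
  ⨆ φ ∈ {φ : Ed d → ℝ | InBr r φ}, ENNReal.ofReal |u (scaleTF φ x 1)|

/-- Local Besov space `B^γ_{p,q,loc}(ℝ^d)`, negative-regularity characterization. -/
def MemBesovLocNeg (u : Distr d) (γ : ℝ) (p q : ℝ≥0∞) : Prop :=
  ∃ r : ℕ, (r : ℝ) > -γ ∧ ∀ K : Set (Ed d), IsCompact K →
    lqSeq q (fun n => lpOn p K (besovTermNeg u γ r n)) < ∞

/-- Global Besov space `B^γ_{p,q}(ℝ^d)`, negative-regularity characterization. -/
def MemBesovNeg (u : Distr d) (γ : ℝ) (p q : ℝ≥0∞) : Prop :=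
  ∃ r : ℕ, (r : ℝ) > -γ ∧ lqSeq q (fun n => lpOn p Set.univ (besovTermNeg u γ r n)) < ∞

/-- Local Besov space `B^α_{p,q,loc}(ℝ^d)`, nonnegative-regularity characterization. -/
def MemBesovLocPos (u : Distr d) (α : ℝ) (p q : ℝ≥0∞) : Prop :=
  ∃ r : ℕ, (r : ℝ) > -α ∧ ∀ K : Set (Ed d), IsCompact K →
    lpOn p K (besovTermUnit u r) < ∞ ∧
    lqSeq q (fun n => lpOn p K (besovTermPos u α r n)) < ∞

/-- `β*_g = sup {γ ≤ 0 : g ∈ B^γ_{p,∞,loc} for some p ∈ [2,∞]}`. -/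
def betaStar (g : Distr d) : ℝ :=
  sSup {γ : ℝ | γ ≤ 0 ∧ ∃ p : ℝ≥0∞, 2 ≤ p ∧ MemBesovLocNeg g γ p ∞}

/-- Multiplication of a distribution by a function: `(h·u)(ψ) = u(hψ)`. -/
def mulD (h : Ed d → ℝ) (u : Distr d) : Distr d :=
  u.comp (LinearMap.mulLeft ℝ h)

/-- The Fourier transform of a (compactly supported) distribution, as a function. -/
def distFourier (u : Distr d) (ξ : Ed d) : ℂ :=
  (u (fun x => Real.cos (2 * π * (inner ℝ x ξ : ℝ))) : ℂ) -
    (u (fun x => Real.sin (2 * π * (inner ℝ x ξ : ℝ))) : ℂ) * Complex.I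

/-- The Japanese bracket weight `⟨ξ⟩^{2s} = (1 + |ξ|²)^s`. -/
def japBr (ξ : Ed d) (s : ℝ) : ℝ≥0∞ := ENNReal.ofReal ((1 + ‖ξ‖ ^ 2) ^ s)

/-- `H^s(ℝ^d)` membership for a compactly supported distribution. -/
def MemHsCompact (v : Distr d) (s : ℝ) : Prop :=
  (∫⁻ ξ : Ed d, japBr ξ s * (‖distFourier v ξ‖₊ : ℝ≥0∞) ^ 2) < ∞

/-- `H^s_loc(ℝ^d)` membership: every localization lies in `H^s`. -/
def MemHsLoc (u : Distr d) (s : ℝ) : Prop :=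
  ∀ φ : Ed d → ℝ, IsTestFunction φ → MemHsCompact (mulD φ u) s

/-- A conic subset of `ℝ^d`. -/
def IsConicSet (Γ : Set (Ed d)) : Prop := ∀ ξ ∈ Γ, ∀ t : ℝ, 0 < t → t • ξ ∈ Γ

/-- The Sobolev (`H^s`) wave front set of a distribution on `ℝ^d`. -/
def sobolevWF (u : Distr d) (s : ℝ) : Set (Ed d × Ed d) :=
  {p | p.2 ≠ 0 ∧ ¬ ∃ φ : Ed d → ℝ, IsTestFunction φ ∧ φ p.1 ≠ 0 ∧
    ∃ Γ : Set (Ed d), IsOpen Γ ∧ IsConicSet Γ ∧ p.2 ∈ Γ ∧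
      (∫⁻ ξ in Γ, japBr ξ s * (‖distFourier (mulD φ u) ξ‖₊ : ℝ≥0∞) ^ 2) < ∞}

/-- A distribution with compact support. -/
def DistrHasCompactSupport (u : Distr d) : Prop :=
  ∃ K : Set (Ed d), IsCompact K ∧
    ∀ ψ, IsTestFunction ψ → (∀ x ∈ K, ψ x = 0) → u ψ = 0

/-- The singular support of a distribution. -/
def singSupp (u : Distr d) : Set (Ed d) :=
  {x | ¬ ∃ U : Set (Ed d), IsOpen U ∧ x ∈ U ∧ ∃ h : Ed d → ℝ, ContDiffOn ℝ (⊤ : ℕ∞) h U ∧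
    ∀ ψ, IsTestFunction ψ → tsupport ψ ⊆ U → u ψ = ∫ y, h y * ψ y}

/-- The singular support of a function: points with no neighbourhood on which it is smooth. -/
def funSingSupp (f : Ed d → ℝ) : Set (Ed d) :=
  {x | ¬ ∃ U : Set (Ed d), IsOpen U ∧ x ∈ U ∧ ContDiffOn ℝ (⊤ : ℕ∞) f U}

/-- A mollifier: a test function supported in the unit ball with total integral 1. -/
def IsMollifier (ρ : Ed d → ℝ) : Prop :=
  IsTestFunction ρ ∧ tsupport ρ ⊆ Metric.ball (0 : Ed d) 1 ∧ (∫ x, ρ x) = 1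

/-- The mollification `(u * ρ_ε)(x)`. -/
def mollifyAt (u : Distr d) (ρ : Ed d → ℝ) (ε : ℝ) (x : Ed d) : ℝ :=
  u (fun y => ε ^ (-(d : ℤ)) * ρ (ε⁻¹ • (x - y)))

/-- `w` is the canonical product `f·g = Δ*(f ⊗ g)`: for every mollifier, the products of
the mollifications converge to `w`. -/
def IsCanonicalProduct (f g w : Distr d) : Prop :=
  ∀ ρ : Ed d → ℝ, IsMollifier ρ → ∀ ψ : Ed d → ℝ, IsTestFunction ψ →
    Tendsto (fun ε : ℝ => ∫ x, mollifyAt f ρ ε x * mollifyAt g ρ ε x * ψ x)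
      (𝓝[>] (0 : ℝ)) (𝓝 (w ψ))

/-- Canonical product on an open subset `U` of `ℝ^d`. -/
def IsCanonicalProductOn (f g w : Distr d) (U : Set (Ed d)) : Prop :=
  ∀ ρ : Ed d → ℝ, IsMollifier ρ → ∀ ψ : Ed d → ℝ, IsTestFunction ψ → tsupport ψ ⊆ U →
    Tendsto (fun ε : ℝ => ∫ x, mollifyAt f ρ ε x * mollifyAt g ρ ε x * ψ x)
      (𝓝[>] (0 : ℝ)) (𝓝 (w ψ))

/-- Hölder regularity on an open subset `U`. -/
def HolderDistOnOpen (u : Distr d) (β : ℝ) (U : Set (Ed d)) : Prop :=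
  ∀ K : Set (Ed d), K ⊆ U → IsCompact K → ∃ C : ℝ, ∀ x ∈ K, ∀ l ∈ Set.Ioc (0 : ℝ) 1,
    ∀ φ, InBr (-(lfloor β)).toNat φ → tsupport (scaleTF φ x l) ⊆ U →
      |u (scaleTF φ x l)| ≤ C * l ^ β

/-- Precomposition with the scaling `f ↦ f^λ_{x₀}`, as a linear map. -/
def sdScaleMap (x₀ : Ed d) (l : ℝ) : (Ed d → ℝ) →ₗ[ℝ] (Ed d → ℝ) where
  toFun f := sdScaleFun f x₀ l
  map_add' f g := by funext z; simp [sdScaleFun, mul_add]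
  map_smul' c f := by funext z; simp [sdScaleFun, smul_eq_mul]; ring

/-- The scaled distribution `t^λ_{x₀}`. -/
def scaleDistr (t : Distr d) (x₀ : Ed d) (l : ℝ) : Distr d := t.comp (sdScaleMap x₀ l)

/-- Scaling degree of a distribution at a point. -/
def sdAt (t : Distr d) (x₀ : Ed d) : ℝ :=
  sInf {ω : ℝ | ∀ f : Ed d → ℝ, IsTestFunction f →
    Tendsto (fun l : ℝ => l ^ ω * scaleDistr t x₀ l f) (𝓝[>] (0 : ℝ)) (𝓝 0)}

/-- Scaling degree at `x₀` of a distribution defined away from `x₀`. -/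
def sdAtAway (t : Distr d) (x₀ : Ed d) : ℝ :=
  sInf {ω : ℝ | ∀ f : Ed d → ℝ, IsTestFunction f → x₀ ∉ tsupport f →
    Tendsto (fun l : ℝ => l ^ ω * scaleDistr t x₀ l f) (𝓝[>] (0 : ℝ)) (𝓝 0)}

/-- `te` extends `t` away from `x`: they agree on test functions supported away from `x`. -/
def ExtendsAway (te t : Distr d) (x : Ed d) : Prop :=
  ∀ ψ : Ed d → ℝ, IsTestFunction ψ → x ∉ tsupport ψ → te ψ = t ψ

/-- Equality of distributions (on test functions). -/
def DistrEq (u v : Distr d) : Prop := ∀ ψ, IsTestFunction ψ → u ψ = v ψ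

/-- A `(a,γ)`-coherent germ of distributions. -/
def IsCoherentGerm (F : Ed d → Distr d) (a γ : ℝ) : Prop :=
  ∀ r : ℕ, (r : ℝ) > -a → ∀ K : Set (Ed d), IsCompact K → ∃ C : ℝ,
    ∀ x ∈ K, ∀ y ∈ K, ∀ l ∈ Set.Ioc (0 : ℝ) 1, ∀ φ, InBr r φ →
      |F x (scaleTF φ y l) - F y (scaleTF φ y l)| ≤ C * l ^ a * (‖x - y‖ + l) ^ (γ - a)

/-- The `1`-enlargement of a set. -/
def enl1 (K : Set (Ed d)) : Set (Ed d) := {x | ∃ y ∈ K, dist x y ≤ 1}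

/-- The Dirac delta distribution at `x`. -/
def diracD (x : Ed d) : Distr d where
  toFun f := f x
  map_add' := fun _ _ => rfl
  map_smul' := fun _ _ => rfl

lemma isTestFunction_scaled {ρ : Ed d → ℝ} (hρ : IsTestFunction ρ) (x : Ed d) {ε : ℝ}
    (hε : ε ≠ 0) :
    IsTestFunction (fun y => (ε : ℝ) ^ (-(d : ℤ)) * ρ (ε⁻¹ • (x - y))) := by
  constructor
  · exact contDiff_const.mul (hρ.1.comp ((contDiff_const.sub contDiff_id).const_smul ε⁻¹))
  · have h : (fun y => (ε : ℝ) ^ (-(d : ℤ)) * ρ (ε⁻¹ • (x - y)))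
        = (fun z => (ε : ℝ) ^ (-(d : ℤ)) * ρ z) ∘
          ((Homeomorph.subLeft x).trans (Homeomorph.smulOfNeZero ε⁻¹ (inv_ne_zero hε))) := rfl
    rw [h]
    exact (hρ.2.mul_left).comp_homeomorph _

lemma bound_of_compactSupport {g : Ed d → ℝ} (hg : Continuous g) (h : HasCompactSupport g) :
    ∃ C : ℝ, 0 ≤ C ∧ ∀ x, |g x| ≤ C := by
  obtain ⟨C, hC⟩ := h.isCompact.exists_bound_of_continuousOn hg.continuousOn
  refine ⟨max C 0, le_max_right _ _, fun x => ?_⟩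
  by_cases hx : x ∈ tsupport g
  · exact le_trans (by simpa [Real.norm_eq_abs] using hC x hx) (le_max_left _ _)
  · simp [image_eq_zero_of_notMem_tsupport hx]

lemma mollify_repr (f : Ed d → ℝ) (F : Distr d)
    (hF : ∀ ψ, IsTestFunction ψ → F ψ = ∫ x, f x * ψ x)
    {ρ : Ed d → ℝ} (hρ : IsTestFunction ρ) (x : Ed d) {ε : ℝ} (hε : 0 < ε) :
    mollifyAt F ρ ε x = ∫ v, f (x - ε • v) * ρ v := by
  have hc : (ε : ℝ) ^ (-(d : ℤ)) = (ε ^ d)⁻¹ := by rw [zpow_neg, zpow_natCast]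
  have h1 : mollifyAt F ρ ε x = ∫ y, f y * ((ε:ℝ) ^ (-(d:ℤ)) * ρ (ε⁻¹ • (x - y))) :=
    hF _ (isTestFunction_scaled hρ x hε.ne')
  have h2 : (∫ y, f y * ((ε:ℝ)^(-(d:ℤ)) * ρ (ε⁻¹ • (x - y))))
      = ∫ y, f (x - y) * ((ε:ℝ)^(-(d:ℤ)) * ρ (ε⁻¹ • y)) := by
    rw [← integral_sub_left_eq_self
      (fun y => f (x - y) * ((ε:ℝ)^(-(d:ℤ)) * ρ (ε⁻¹ • y))) volume x]
    congr 1
    funext y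
    rw [sub_sub_cancel]
  have h4 := MeasureTheory.Measure.integral_comp_smul (volume : Measure (Ed d))
      (fun y => f (x - y) * ((ε:ℝ)^(-(d:ℤ)) * ρ (ε⁻¹ • y))) ε
  rw [finrank_euclideanSpace_fin] at h4
  have habs : |((ε:ℝ)^d)⁻¹| = ((ε:ℝ)^d)⁻¹ := abs_of_pos (by positivity)
  rw [habs] at h4
  have hsm : ∀ v : Ed d, ε⁻¹ • ε • v = v := fun v => by
    rw [smul_smul, inv_mul_cancel₀ hε.ne', one_smul]
  simp only [hsm] at h4
  rw [h1, h2]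
  have : (∫ y, f (x - y) * ((ε:ℝ)^(-(d:ℤ)) * ρ (ε⁻¹ • y)))
      = (ε^d) • ∫ v, f (x - ε • v) * ((ε:ℝ)^(-(d:ℤ)) * ρ v) := by
    rw [h4, smul_smul, mul_inv_cancel₀ (by positivity), one_smul]
  rw [this, hc]
  rw [← integral_smul]
  congr 1
  funext v
  have hne : ((ε:ℝ)^d) ≠ 0 := by positivity
  field_simp
  rw [smul_eq_mul]; field_simp


end
set_option maxHeartbeats 1000000 in
/-- for `f ∈ C^α_loc` with `α > d/2` and the Dirac delta `δ₀ ∈ C^{-d}`,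
the canonical product `f·δ₀` exists, is given by `(f·δ₀)(φ) = δ₀(fφ)`, and equals `f(0)δ₀`. -/
theorem product_with_dirac
    (d : ℕ) (hd : 1 ≤ d) (α : ℝ) (hα : (d : ℝ) / 2 < α)
    (f : Ed d → ℝ) (hf : HolderFunLoc α f)
    (F : Distr d) (hF : ∀ ψ, IsTestFunction ψ → F ψ = ∫ x, f x * ψ x)
    (hδ : HolderDistOn (diracD (0 : Ed d)) (-(d : ℝ))) :
    ∃ w : Distr d, IsCanonicalProduct F (diracD (0 : Ed d)) w ∧
      ∀ φ : Ed d → ℝ, IsTestFunction φ →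
        w φ = diracD (0 : Ed d) (fun x => f x * φ x) ∧ w φ = f 0 * φ 0 := by
  classical
  have hfc : Continuous f := hf.1.continuous
  refine ⟨f 0 • diracD 0, ?_, fun φ hφ => ⟨rfl, rfl⟩⟩
  intro ρ hρm ψ hψ
  obtain ⟨hρt, hρsupp, hρone⟩ := hρm
  have hρc : Continuous ρ := hρt.1.continuous
  have hψc : Continuous ψ := hψ.1.continuous
  have hρint : Integrable ρ := hρc.integrable_of_hasCompactSupport hρt.2
  have hwψ : (f 0 • diracD (0 : Ed d)) ψ = f 0 * ψ 0 := rfl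
  rw [hwψ]
  set G : ℝ → Ed d → ℝ :=
    fun ε u => (∫ v, f (ε • u - ε • v) * ρ v) * (ρ u * ψ (ε • u)) with hGdef
  have key : ∀ ε ∈ Set.Ioc (0:ℝ) 1,
      (∫ x, mollifyAt F ρ ε x * mollifyAt (diracD (0 : Ed d)) ρ ε x * ψ x) = ∫ u, G ε u := by
    intro ε hε
    have hε0 : (0:ℝ) < ε := hε.1
    have hc : (ε : ℝ) ^ (-(d : ℤ)) = (ε ^ d)⁻¹ := by rw [zpow_neg, zpow_natCast]
    have hδm : ∀ x : Ed d, mollifyAt (diracD (0 : Ed d)) ρ ε x = (ε ^ d)⁻¹ * ρ (ε⁻¹ • x) := by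
      intro x
      show (ε:ℝ) ^ (-(d:ℤ)) * ρ (ε⁻¹ • (x - 0)) = _
      rw [hc, sub_zero]
    have hFm : ∀ x : Ed d, mollifyAt F ρ ε x = ∫ v, f (x - ε • v) * ρ v :=
      fun x => mollify_repr f F hF hρt x hε0
    have h4 := MeasureTheory.Measure.integral_comp_smul (volume : Measure (Ed d))
        (fun x => mollifyAt F ρ ε x * mollifyAt (diracD (0 : Ed d)) ρ ε x * ψ x) ε
    rw [finrank_euclideanSpace_fin,
      abs_of_pos (show (0:ℝ) < ((ε:ℝ)^d)⁻¹ by positivity)] at h4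
    have step : (∫ x, mollifyAt F ρ ε x * mollifyAt (diracD (0 : Ed d)) ρ ε x * ψ x)
        = (ε^d) • ∫ u, mollifyAt F ρ ε (ε • u) * mollifyAt (diracD (0 : Ed d)) ρ ε (ε • u)
            * ψ (ε • u) := by
      rw [h4, smul_smul, mul_inv_cancel₀ (by positivity), one_smul]
    rw [step]
    have hfun : (fun u => mollifyAt F ρ ε (ε • u) * mollifyAt (diracD (0 : Ed d)) ρ ε (ε • u)
          * ψ (ε • u)) = fun u => (ε^d)⁻¹ * G ε u := by
      funext u
      rw [hFm, hδm, hGdef]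
      have h5 : ε⁻¹ • ε • u = u := by rw [smul_smul, inv_mul_cancel₀ hε0.ne', one_smul]
      rw [h5]
      ring
    rw [hfun, integral_const_mul, smul_eq_mul, ← mul_assoc,
      mul_inv_cancel₀ (by positivity), one_mul]
  obtain ⟨Mf, hMf0, hMf⟩ : ∃ C, 0 ≤ C ∧ ∀ z ∈ Metric.closedBall (0 : Ed d) 2, |f z| ≤ C := by
    obtain ⟨C, hC⟩ :=
      (isCompact_closedBall (0 : Ed d) 2).exists_bound_of_continuousOn hfc.continuousOn
    exact ⟨max C 0, le_max_right _ _, fun z hz =>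
      le_trans (by simpa [Real.norm_eq_abs] using hC z hz) (le_max_left _ _)⟩
  obtain ⟨Mψ, hMψ0, hMψ⟩ := bound_of_compactSupport hψc hψ.2
  set Iρ : ℝ := ∫ v, |ρ v| with hIρ
  have hIρ0 : 0 ≤ Iρ := integral_nonneg fun v => abs_nonneg _
  have habs_int : Integrable (fun v : Ed d => |ρ v|) := hρint.abs
  set bound : Ed d → ℝ := fun u => (Mf * Iρ * Mψ) * |ρ u| with hbdef
  have hbound_int : Integrable bound := habs_int.const_mul _
  have hmeas : ∀ ε : ℝ, AEStronglyMeasurable (G ε) volume := by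
    intro ε
    have hcont : Continuous fun p : Ed d × Ed d => f (ε • p.1 - ε • p.2) * ρ p.2 := by
      fun_prop
    have h1 : StronglyMeasurable fun u : Ed d => ∫ v, f (ε • u - ε • v) * ρ v :=
      hcont.stronglyMeasurable.integral_prod_right'
    exact (h1.aestronglyMeasurable).mul
      ((hρc.mul (hψc.comp (continuous_const_smul ε))).aestronglyMeasurable)
  have hsupp1 : ∀ u : Ed d, ρ u ≠ 0 → ‖u‖ < 1 := by
    intro u hu
    have hmem : u ∈ tsupport ρ := subset_tsupport ρ hu
    simpa [Metric.mem_ball, dist_zero_right] using hρsupp hmem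
  have hIoc : Set.Ioc (0:ℝ) 1 ∈ 𝓝[>] (0:ℝ) := Ioc_mem_nhdsGT_of_mem ⟨le_refl 0, one_pos⟩
  have h_bound : ∀ᶠ ε in 𝓝[>] (0:ℝ), ∀ᵐ u : Ed d, ‖G ε u‖ ≤ bound u := by
    filter_upwards [hIoc] with ε hε
    refine Filter.Eventually.of_forall fun u => ?_
    by_cases hu : ρ u = 0
    · simp only [hGdef, hbdef, hu, abs_zero, mul_zero, zero_mul, norm_zero]
      positivity
    · have hu1 : ‖u‖ < 1 := hsupp1 u hu
      have hinner : |∫ v, f (ε • u - ε • v) * ρ v| ≤ Mf * Iρ := by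
        rw [← Real.norm_eq_abs]
        calc ‖∫ v, f (ε • u - ε • v) * ρ v‖ ≤ ∫ v, Mf * |ρ v| := by
              refine norm_integral_le_of_norm_le (habs_int.const_mul Mf)
                (Filter.Eventually.of_forall fun v => ?_)
              by_cases hv : ρ v = 0
              · simp [hv, mul_nonneg hMf0 (abs_nonneg (ρ v))]
              · have hv1 : ‖v‖ < 1 := hsupp1 v hv
                have harg : ε • u - ε • v ∈ Metric.closedBall (0 : Ed d) 2 := by
                  rw [Metric.mem_closedBall, dist_zero_right, ← smul_sub]
                  calc ‖ε • (u - v)‖ = |ε| * ‖u - v‖ := norm_smul _ _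
                    _ ≤ 1 * (‖u‖ + ‖v‖) := by
                        apply mul_le_mul (abs_le.2 ⟨by linarith [hε.1], hε.2⟩)
                          (norm_sub_le _ _) (norm_nonneg _) zero_le_one
                    _ ≤ 2 := by rw [one_mul]; linarith
                rw [Real.norm_eq_abs, abs_mul]
                exact mul_le_mul_of_nonneg_right (hMf _ harg) (abs_nonneg _)
          _ = Mf * Iρ := integral_const_mul _ _
      simp only [hGdef, Real.norm_eq_abs, abs_mul]
      calc |∫ v, f (ε • u - ε • v) * ρ v| * (|ρ u| * |ψ (ε • u)|)
          ≤ (Mf * Iρ) * (|ρ u| * Mψ) := by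
            apply mul_le_mul hinner (mul_le_mul_of_nonneg_left (hMψ _) (abs_nonneg _))
              (mul_nonneg (abs_nonneg _) (abs_nonneg _)) (mul_nonneg hMf0 hIρ0)
        _ = bound u := by rw [hbdef]; ring
  have h_lim : ∀ u : Ed d,
      Tendsto (fun ε => G ε u) (𝓝[>] (0:ℝ)) (𝓝 (f 0 * (ρ u * ψ 0))) := by
    intro u
    have hA : Tendsto (fun ε : ℝ => ∫ v, f (ε • u - ε • v) * ρ v) (𝓝[>] (0:ℝ))
        (𝓝 (f 0)) := by
      obtain ⟨Mu, hMu0, hMu⟩ :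
          ∃ C, 0 ≤ C ∧ ∀ z ∈ Metric.closedBall (0 : Ed d) (‖u‖ + 1), |f z| ≤ C := by
        obtain ⟨C, hC⟩ := (isCompact_closedBall (0 : Ed d) (‖u‖ + 1)).exists_bound_of_continuousOn
          hfc.continuousOn
        exact ⟨max C 0, le_max_right _ _, fun z hz =>
          le_trans (by simpa [Real.norm_eq_abs] using hC z hz) (le_max_left _ _)⟩
      have hDC := tendsto_integral_filter_of_dominated_convergence (μ := volume)
        (F := fun (ε : ℝ) (v : Ed d) => f (ε • u - ε • v) * ρ v)
        (f := fun v : Ed d => f 0 * ρ v) (bound := fun v : Ed d => Mu * |ρ v|)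
        (Filter.Eventually.of_forall fun ε =>
          ((by fun_prop : Continuous fun v : Ed d =>
              f (ε • u - ε • v) * ρ v)).aestronglyMeasurable)
        (by
          filter_upwards [hIoc] with ε hε
          refine Filter.Eventually.of_forall fun v => ?_
          by_cases hv : ρ v = 0
          · simp [hv, mul_nonneg hMu0 (abs_nonneg (ρ v))]
          · have hv1 : ‖v‖ < 1 := hsupp1 v hv
            have harg : ε • u - ε • v ∈ Metric.closedBall (0 : Ed d) (‖u‖ + 1) := by
              rw [Metric.mem_closedBall, dist_zero_right, ← smul_sub]
              calc ‖ε • (u - v)‖ = |ε| * ‖u - v‖ := norm_smul _ _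
                _ ≤ 1 * (‖u‖ + ‖v‖) := by
                    apply mul_le_mul (abs_le.2 ⟨by linarith [hε.1], hε.2⟩)
                      (norm_sub_le _ _) (norm_nonneg _) zero_le_one
                _ ≤ ‖u‖ + 1 := by rw [one_mul]; linarith
            rw [Real.norm_eq_abs, abs_mul]
            exact mul_le_mul_of_nonneg_right (hMu _ harg) (abs_nonneg _))
        (habs_int.const_mul Mu)
        (Filter.Eventually.of_forall fun v => by
          have hcont : Continuous fun ε : ℝ => f (ε • u - ε • v) * ρ v := by fun_prop
          have h0 : Tendsto (fun ε : ℝ => f (ε • u - ε • v) * ρ v) (𝓝 0)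
              (𝓝 (f ((0:ℝ) • u - (0:ℝ) • v) * ρ v)) := hcont.tendsto 0
          simpa [zero_smul, sub_zero] using h0.mono_left nhdsWithin_le_nhds)
      have hval : (∫ v, f 0 * ρ v) = f 0 := by rw [integral_const_mul, hρone, mul_one]
      rwa [hval] at hDC
    have hB : Tendsto (fun ε : ℝ => ρ u * ψ (ε • u)) (𝓝[>] (0:ℝ)) (𝓝 (ρ u * ψ 0)) := by
      have hcont : Continuous fun ε : ℝ => ρ u * ψ (ε • u) := by fun_prop
      have h0 : Tendsto (fun ε : ℝ => ρ u * ψ (ε • u)) (𝓝 0)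
          (𝓝 (ρ u * ψ ((0:ℝ) • u))) := hcont.tendsto 0
      simpa [zero_smul] using h0.mono_left nhdsWithin_le_nhds
    exact hA.mul hB
  have hDC := tendsto_integral_filter_of_dominated_convergence (μ := volume)
      (F := G) (f := fun u : Ed d => f 0 * (ρ u * ψ 0)) bound
      (Filter.Eventually.of_forall hmeas) h_bound hbound_int
      (Filter.Eventually.of_forall h_lim)
  have hval : (∫ u, f 0 * (ρ u * ψ 0)) = f 0 * ψ 0 := by
    rw [integral_const_mul]
    congr 1
    rw [integral_mul_const, hρone, one_mul]
  rw [hval] at hDC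
  refine hDC.congr' ?_
  filter_upwards [hIoc] with ε hε
  exact (key ε hε).symm
end

section
/- Let d > 2, let f ∈ C^d(ℝ^d) with singsupp(f) = {0, y} for some y ≠ 0, and let g = δ₀ + δ_y^{(1)} ∈ C^{−d−1}(ℝ^d), where δ₀ is the Dirac delta centered at the origin and δ_y^{(1)} is a first-order distributional derivative of the Dirac delta centered at y. Then the canonical product f·g ∈ D'(ℝ^d) exists, even though the classical Young condition α + β > 0 fails (here α + β = −1). -/
open MeasureTheory Real Set Filter Metric
open scoped ENNReal NNReal Topology BigOperators

section AuxProofs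

open Filter MeasureTheory Metric

variable {d : ℕ}

lemma exists_bound_of_hasCompactSupport {E : Type*} [NormedAddCommGroup E]
    {φ : Ed d → E} (hc : Continuous φ) (hs : HasCompactSupport φ) :
    ∃ K : ℝ, 0 ≤ K ∧ ∀ u, ‖φ u‖ ≤ K := by
  obtain ⟨C, hC⟩ := hs.exists_bound_of_continuousOn hc.continuousOn
  refine ⟨max C 0, le_max_right _ _, fun u => ?_⟩
  by_cases hu : u ∈ tsupport φ
  · exact (hC u hu).trans (le_max_left _ _)
  · simp [image_eq_zero_of_notMem_tsupport hu]

lemma exists_bound_on_closedBall {f : Ed d → ℝ} (hfc : Continuous f) (p : Ed d) (r : ℝ) :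
    ∃ M : ℝ, 0 ≤ M ∧ ∀ z ∈ Metric.closedBall p r, |f z| ≤ M := by
  obtain ⟨C, hC⟩ := (isCompact_closedBall p r).exists_bound_of_continuousOn hfc.continuousOn
  exact ⟨max C 0, le_max_right _ _, fun z hz => (hC z hz).trans (le_max_left _ _)⟩

lemma isTestFunction_kernel {ρ : Ed d → ℝ} (hρ : IsTestFunction ρ) (x : Ed d) {ε : ℝ}
    (hε : 0 < ε) : IsTestFunction fun z : Ed d => ε ^ (-(d : ℤ)) * ρ (ε⁻¹ • (x - z)) := by
  constructor
  · exact contDiff_const.mul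
      (hρ.1.comp ((contDiff_const.sub contDiff_id).const_smul ε⁻¹))
  · obtain ⟨R, hR⟩ := hρ.2.isBounded.subset_closedBall 0
    refine HasCompactSupport.intro (isCompact_closedBall x (ε * R)) fun z hz => ?_
    have hmem : ε⁻¹ • (x - z) ∉ tsupport ρ := by
      intro hmem
      have h1 : ‖ε⁻¹ • (x - z)‖ ≤ R := by simpa using hR hmem
      have h2 : ‖ε⁻¹ • (x - z)‖ = ε⁻¹ * ‖x - z‖ := by
        rw [norm_smul, Real.norm_eq_abs, abs_of_pos (inv_pos.2 hε)]
      have h3 : ‖x - z‖ ≤ ε * R := by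
        rw [h2] at h1
        calc ‖x - z‖ = ε * (ε⁻¹ * ‖x - z‖) := by field_simp
        _ ≤ ε * R := by nlinarith [h1, hε]
      refine hz (by simpa [Metric.mem_closedBall, dist_eq_norm, norm_sub_rev z x] using h3)
    simp [image_eq_zero_of_notMem_tsupport hmem]

lemma conv_change {f ρ : Ed d → ℝ} {ε : ℝ} (hε : 0 < ε) (x : Ed d) :
    ∫ z, f z * (ε ^ (-(d : ℤ)) * ρ (ε⁻¹ • (x - z))) = ∫ u, f (x - ε • u) * ρ u := by
  have hpos : (0:ℝ) < ε ^ d := pow_pos hε d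
  have h1 : ∫ z, f z * (ε ^ (-(d:ℤ)) * ρ (ε⁻¹ • (x - z)))
      = ∫ z, f (x - z) * (ε ^ (-(d:ℤ)) * ρ (ε⁻¹ • z)) := by
    rw [← integral_sub_left_eq_self (fun z => f (x - z) * (ε ^ (-(d:ℤ)) * ρ (ε⁻¹ • z))) volume x]
    congr 1; ext z; rw [sub_sub_cancel]
  have h2 := MeasureTheory.Measure.integral_comp_smul (volume : Measure (Ed d))
      (fun z => f (x - z) * (ε ^ (-(d:ℤ)) * ρ (ε⁻¹ • z))) ε
  have habs : |((ε:ℝ) ^ Module.finrank ℝ (Ed d))⁻¹| = (ε ^ d)⁻¹ := by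
    rw [finrank_euclideanSpace_fin, abs_of_pos (inv_pos.2 hpos)]
  rw [habs] at h2
  have hzp : (ε:ℝ) ^ (-(d:ℤ)) = (ε ^ d)⁻¹ := by
    rw [zpow_neg, zpow_natCast]
  calc ∫ z, f z * (ε ^ (-(d:ℤ)) * ρ (ε⁻¹ • (x - z)))
      = ε ^ d • ((ε ^ d)⁻¹ • ∫ z, f (x - z) * (ε ^ (-(d:ℤ)) * ρ (ε⁻¹ • z))) := by
        rw [h1, smul_smul, mul_inv_cancel₀ hpos.ne', one_smul]
    _ = ε ^ d • ∫ u, f (x - ε • u) * (ε ^ (-(d:ℤ)) * ρ (ε⁻¹ • (ε • u))) := by rw [← h2]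
    _ = ∫ u, f (x - ε • u) * ρ u := by
        rw [← integral_smul]
        congr 1; ext u
        have hu : ε⁻¹ • (ε • u) = u := by rw [smul_smul, inv_mul_cancel₀ hε.ne', one_smul]
        rw [hu, hzp, smul_eq_mul]
        field_simp

lemma integral_shift_scale {W : Ed d → ℝ} {ε : ℝ} (hε : 0 < ε) (y : Ed d) :
    ∫ x, W x = ∫ u, ε ^ d * W (y + ε • u) := by
  have hpos : (0:ℝ) < ε ^ d := pow_pos hε d
  have h0 : ∫ x, W x = ∫ x, W (x + y) := (integral_add_right_eq_self W y).symm
  have h2 := MeasureTheory.Measure.integral_comp_smul (volume : Measure (Ed d))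
      (fun x => W (x + y)) ε
  have habs : |((ε:ℝ) ^ Module.finrank ℝ (Ed d))⁻¹| = (ε ^ d)⁻¹ := by
    rw [finrank_euclideanSpace_fin, abs_of_pos (inv_pos.2 hpos)]
  rw [habs] at h2
  calc ∫ x, W x = ε ^ d • ((ε ^ d)⁻¹ • ∫ x, W (x + y)) := by
        rw [← h0, smul_smul, mul_inv_cancel₀ hpos.ne', one_smul]
    _ = ε ^ d • ∫ u, W (ε • u + y) := by rw [← h2]
    _ = ∫ u, ε ^ d * W (y + ε • u) := by
        rw [← integral_smul]
        congr 1; ext u; rw [smul_eq_mul, add_comm]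

end AuxProofs

section AuxProofs2

open Filter MeasureTheory Metric

variable {d : ℕ}

lemma A_cont {f ρ : Ed d → ℝ} (hfc : Continuous f) (hρ : IsTestFunction ρ)
    (hsup : tsupport ρ ⊆ Metric.ball 0 1) {ε : ℝ} (hε : 0 < ε) :
    Continuous fun x : Ed d => ∫ u, f (x - ε • u) * ρ u := by
  have hρc : Continuous ρ := hρ.1.continuous
  rw [continuous_iff_continuousAt]
  intro x₀
  obtain ⟨M, hM0, hM⟩ := exists_bound_on_closedBall hfc x₀ (1 + ε)
  have hbint : Integrable (fun u : Ed d => M * |ρ u|) :=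
    ((hρc.abs).integrable_of_hasCompactSupport hρ.2.abs).const_mul M
  refine tendsto_integral_filter_of_dominated_convergence (fun u => M * |ρ u|)
    ?_ ?_ hbint ?_
  · filter_upwards with x
    exact ((hfc.comp (continuous_const.sub (continuous_const_smul ε))).mul hρc).aestronglyMeasurable
  · filter_upwards [Metric.closedBall_mem_nhds x₀ one_pos] with x hx
    filter_upwards with u
    by_cases hu : u ∈ tsupport ρ
    · have hun : ‖u‖ < 1 := by simpa using hsup hu
      have harg : x - ε • u ∈ Metric.closedBall x₀ (1 + ε) := by
        rw [Metric.mem_closedBall, dist_eq_norm]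
        have he : x - ε • u - x₀ = (x - x₀) - ε • u := by abel
        rw [he]
        have h1 : ‖x - x₀‖ ≤ 1 := by
          rw [← dist_eq_norm]; exact Metric.mem_closedBall.1 hx
        have h2 : ‖ε • u‖ ≤ ε := by
          rw [norm_smul, Real.norm_eq_abs, abs_of_pos hε]
          nlinarith [hun, norm_nonneg u]
        calc ‖(x - x₀) - ε • u‖ ≤ ‖x - x₀‖ + ‖ε • u‖ := norm_sub_le _ _
          _ ≤ 1 + ε := by linarith
      calc ‖f (x - ε • u) * ρ u‖ = |f (x - ε • u)| * |ρ u| := abs_mul _ _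
        _ ≤ M * |ρ u| := mul_le_mul_of_nonneg_right (hM _ harg) (abs_nonneg _)
    · simp [image_eq_zero_of_notMem_tsupport hu]
  · filter_upwards with u
    exact ((hfc.comp (continuous_id.sub continuous_const)).mul continuous_const).tendsto x₀

lemma A_tendsto {f ρ : Ed d → ℝ} (hfc : Continuous f) (hρ : IsTestFunction ρ)
    (hsup : tsupport ρ ⊆ Metric.ball 0 1) (p u : Ed d) :
    Tendsto (fun ε : ℝ => ∫ u', f (p + ε • u - ε • u') * ρ u') (𝓝[>] 0)
      (𝓝 (f p * ∫ u', ρ u')) := by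
  have hρc : Continuous ρ := hρ.1.continuous
  obtain ⟨M, hM0, hM⟩ := exists_bound_on_closedBall hfc p (‖u‖ + 1)
  have hbint : Integrable (fun u' : Ed d => M * |ρ u'|) :=
    ((hρc.abs).integrable_of_hasCompactSupport hρ.2.abs).const_mul M
  have key := tendsto_integral_filter_of_dominated_convergence
    (μ := (volume : Measure (Ed d))) (l := 𝓝[>] (0:ℝ))
    (F := fun ε u' => f (p + ε • u - ε • u') * ρ u') (f := fun u' => f p * ρ u')
    (fun u' => M * |ρ u'|) ?_ ?_ hbint ?_
  · simpa [integral_const_mul] using key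
  · filter_upwards with ε
    exact ((hfc.comp (continuous_const.sub (continuous_const_smul ε))).mul
      hρc).aestronglyMeasurable
  · filter_upwards [Ioc_mem_nhdsGT_of_mem (Set.mem_Ico.2 ⟨le_refl (0:ℝ), zero_lt_one⟩)]
      with ε hε
    filter_upwards with u'
    by_cases hu' : u' ∈ tsupport ρ
    · have hun : ‖u'‖ < 1 := by simpa using hsup hu'
      have harg : p + ε • u - ε • u' ∈ Metric.closedBall p (‖u‖ + 1) := by
        rw [Metric.mem_closedBall, dist_eq_norm]
        have he : p + ε • u - ε • u' - p = ε • (u - u') := by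
          rw [smul_sub]; abel
        rw [he, norm_smul, Real.norm_eq_abs, abs_of_pos hε.1]
        have h3 : ‖u - u'‖ ≤ ‖u‖ + 1 := by
          calc ‖u - u'‖ ≤ ‖u‖ + ‖u'‖ := norm_sub_le _ _
            _ ≤ ‖u‖ + 1 := by linarith
        nlinarith [hε.1, hε.2, norm_nonneg (u - u')]
      calc ‖f (p + ε • u - ε • u') * ρ u'‖ = |f (p + ε • u - ε • u')| * |ρ u'| := abs_mul _ _
        _ ≤ M * |ρ u'| := mul_le_mul_of_nonneg_right (hM _ harg) (abs_nonneg _)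
    · simp [image_eq_zero_of_notMem_tsupport hu']
  · filter_upwards with u'
    have hc : Continuous fun ε : ℝ => p + ε • u - ε • u' :=
      (continuous_const.add (continuous_id.smul continuous_const)).sub
        (continuous_id.smul continuous_const)
    have hcont : Continuous fun ε : ℝ => f (p + ε • u - ε • u') * ρ u' :=
      (hfc.comp hc).mul continuous_const
    have := hcont.tendsto (0:ℝ)
    have h0 : f (p + (0:ℝ) • u - (0:ℝ) • u') * ρ u' = f p * ρ u' := by simp
    rw [h0] at this
    exact this.mono_left nhdsWithin_le_nhds

lemma tendsto_slope_dir {φ : Ed d → ℝ} {p : Ed d} (hφ : DifferentiableAt ℝ φ p) (u : Ed d) :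
    Tendsto (fun ε : ℝ => ε⁻¹ * (φ (p + ε • u) - φ p)) (𝓝[>] 0) (𝓝 (fderiv ℝ φ p u)) := by
  have hcurve : HasDerivAt (fun t : ℝ => p + t • u) u 0 := by
    simpa using ((hasDerivAt_id (0:ℝ)).smul_const u).const_add p
  have hφ' : HasFDerivAt φ (fderiv ℝ φ p) ((fun t : ℝ => p + t • u) 0) := by
    simpa using hφ.hasFDerivAt
  have hcomp : HasDerivAt (fun t : ℝ => φ (p + t • u)) (fderiv ℝ φ p u) 0 :=
    HasFDerivAt.comp_hasDerivAt 0 hφ' hcurve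
  have hts := hasDerivAt_iff_tendsto_slope.mp hcomp
  have hmono : 𝓝[>] (0:ℝ) ≤ 𝓝[≠] (0:ℝ) :=
    nhdsWithin_mono 0 (fun x hx => ne_of_gt hx)
  refine (hts.mono_left hmono).congr' ?_
  filter_upwards [self_mem_nhdsWithin] with ε (hε : ε ∈ Set.Ioi (0:ℝ))
  rw [slope_def_field]
  simp only [sub_zero, zero_smul, add_zero]
  rw [div_eq_inv_mul]

lemma hasCompactSupport_translate {φ : Ed d → ℝ} (h : HasCompactSupport φ) (a : Ed d) :
    HasCompactSupport fun u : Ed d => φ (u + a) :=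
  h.comp_homeomorph (Homeomorph.addRight a)

end AuxProofs2

section AuxProofs3

open Filter MeasureTheory Metric

variable {d : ℕ}

lemma one_le_top_coe : ((⊤ : ℕ∞) : WithTop ℕ∞) ≠ 0 :=
  (lt_of_lt_of_le zero_lt_one (by exact_mod_cast (le_top : (1:ℕ∞) ≤ ⊤) :
    (1 : WithTop ℕ∞) ≤ ((⊤ : ℕ∞) : WithTop ℕ∞))).ne'

lemma integral_affine_mul_fderiv {ρ : Ed d → ℝ} (hρ : IsTestFunction ρ)
    (c : ℝ) (L : Ed d →L[ℝ] ℝ) (v : Ed d) :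
    ∫ u, (c + L u) * fderiv ℝ ρ u v = -(L v) * ∫ u, ρ u := by
  have hρc : Continuous ρ := hρ.1.continuous
  have hρd : Differentiable ℝ ρ := hρ.1.differentiable one_le_top_coe
  have hρ' : Continuous (fderiv ℝ ρ) := hρ.1.continuous_fderiv one_le_top_coe
  obtain ⟨K, hK0, hK⟩ := exists_bound_of_hasCompactSupport hρ' (hρ.2.fderiv ℝ)
  have hcL : Continuous fun u : Ed d => c + L u := continuous_const.add L.continuous
  have hρint : Integrable ρ := hρc.integrable_of_hasCompactSupport hρ.2
  have hint : ∀ a : Ed d, Integrable (fun u : Ed d => (c + L u) * ρ (u + a)) := by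
    intro a
    exact (hcL.mul (hρc.comp (continuous_id.add continuous_const))).integrable_of_hasCompactSupport
      ((hasCompactSupport_translate hρ.2 a).mul_left)
  have hint0 : Integrable (fun u : Ed d => (c + L u) * ρ u) := by
    have := hint 0
    simpa using this
  set q : ℝ → ℝ := fun t => ∫ u, (c + L u) * ρ (u + t • v) with hq
  have hq0 : q 0 = ∫ u, (c + L u) * ρ u := by
    rw [hq]; simp
  have claim1 : ∀ t : ℝ, q t = q 0 - t * (L v * ∫ u, ρ u) := by
    intro t
    have hfe : (fun u : Ed d => (c + L (u - t • v)) * ρ u)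
        = fun u => (c + L u) * ρ u - t * L v * ρ u := by
      funext u
      rw [map_sub, L.map_smul]
      simp only [smul_eq_mul]
      ring
    have h1 : q t = ∫ u, (c + L (u - t • v)) * ρ u := by
      rw [hq]
      rw [← integral_add_right_eq_self (fun u => (c + L (u - t • v)) * ρ u) (t • v)]
      simp only [add_sub_cancel_right]
    rw [h1, hfe, integral_sub hint0 (by simpa [mul_assoc] using hρint.const_mul (t * L v)),
      hq0, integral_const_mul]
    ring
  have claim2 : Tendsto (fun t : ℝ => t⁻¹ * (q t - q 0)) (𝓝[>] 0)
      (𝓝 (∫ u, (c + L u) * fderiv ℝ ρ u v)) := by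
    have heq : (fun t : ℝ => t⁻¹ * (q t - q 0))
        =ᶠ[𝓝[>] (0:ℝ)] fun t => ∫ u, (c + L u) * (t⁻¹ * (ρ (u + t • v) - ρ u)) := by
      filter_upwards [self_mem_nhdsWithin] with t (ht : t ∈ Set.Ioi (0:ℝ))
      rw [hq0, hq]
      rw [← integral_sub (hint (t • v)) hint0, ← integral_const_mul]
      congr 1; funext u; ring
    set S : Set (Ed d) := Metric.cthickening ‖v‖ (tsupport ρ) with hS
    have hScompact : IsCompact S := hρ.2.cthickening
    have hSmeas : MeasurableSet S := hScompact.isClosed.measurableSet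
    have hbint : Integrable (S.indicator fun u : Ed d => (|c| + ‖L‖ * ‖u‖) * (K * ‖v‖)) := by
      refine (ContinuousOn.integrableOn_compact hScompact ?_).integrable_indicator hSmeas
      exact (((continuous_const.add (continuous_const.mul continuous_norm)).mul
        continuous_const)).continuousOn
    have key := tendsto_integral_filter_of_dominated_convergence
      (μ := (volume : Measure (Ed d))) (l := 𝓝[>] (0:ℝ))
      (F := fun t u => (c + L u) * (t⁻¹ * (ρ (u + t • v) - ρ u)))
      (f := fun u => (c + L u) * fderiv ℝ ρ u v)
      (S.indicator fun u : Ed d => (|c| + ‖L‖ * ‖u‖) * (K * ‖v‖)) ?_ ?_ hbint ?_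
    · exact key.congr' heq.symm
    · filter_upwards with t
      exact (hcL.mul (continuous_const.mul ((hρc.comp
        (continuous_id.add continuous_const)).sub hρc))).aestronglyMeasurable
    · filter_upwards [Ioc_mem_nhdsGT_of_mem (Set.mem_Ico.2 ⟨le_refl (0:ℝ), zero_lt_one⟩)]
        with t ht
      filter_upwards with u
      by_cases hu : u ∈ S
      · have hdiff : |ρ (u + t • v) - ρ u| ≤ K * (t * ‖v‖) := by
          have h := Convex.norm_image_sub_le_of_norm_fderiv_le
            (f := ρ) (C := K) (s := (Set.univ : Set (Ed d)))
            (fun x _ => hρd.differentiableAt) (fun x _ => hK x) convex_univ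
            (Set.mem_univ u) (Set.mem_univ (u + t • v))
          rw [add_sub_cancel_left, norm_smul, Real.norm_eq_abs, Real.norm_eq_abs,
            abs_of_pos ht.1] at h
          exact h
        have hquot : |t⁻¹ * (ρ (u + t • v) - ρ u)| ≤ K * ‖v‖ := by
          rw [abs_mul, abs_of_pos (inv_pos.2 ht.1)]
          have h2 : t⁻¹ * |ρ (u + t • v) - ρ u| ≤ t⁻¹ * (K * (t * ‖v‖)) :=
            mul_le_mul_of_nonneg_left hdiff (inv_pos.2 ht.1).le
          have h3 : t⁻¹ * (K * (t * ‖v‖)) = K * ‖v‖ := by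
            rw [show t⁻¹ * (K * (t * ‖v‖)) = (t⁻¹ * t) * (K * ‖v‖) by ring,
              inv_mul_cancel₀ ht.1.ne', one_mul]
          linarith
        have hfac : |c + L u| ≤ |c| + ‖L‖ * ‖u‖ := by
          have h4 := L.le_opNorm u
          rw [Real.norm_eq_abs] at h4
          calc |c + L u| ≤ |c| + |L u| := abs_add_le _ _
            _ ≤ |c| + ‖L‖ * ‖u‖ := by linarith
        rw [Set.indicator_of_mem hu]
        rw [Real.norm_eq_abs, abs_mul]
        exact mul_le_mul hfac hquot (abs_nonneg _) (by positivity)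
      · have hu1 : u ∉ tsupport ρ := fun h => hu (self_subset_cthickening _ h)
        have hu2 : u + t • v ∉ tsupport ρ := by
          intro h
          apply hu
          refine mem_cthickening_of_dist_le u (u + t • v) ‖v‖ _ h ?_
          rw [dist_eq_norm]
          have he : u - (u + t • v) = -(t • v) := by abel
          rw [he, norm_neg, norm_smul, Real.norm_eq_abs, abs_of_pos ht.1]
          nlinarith [ht.2, norm_nonneg v, ht.1]
        rw [Set.indicator_of_notMem hu]
        simp [image_eq_zero_of_notMem_tsupport hu1, image_eq_zero_of_notMem_tsupport hu2]
    · filter_upwards with u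
      exact tendsto_const_nhds.mul (tendsto_slope_dir (hρd.differentiableAt) v)
  have claim3 : Tendsto (fun t : ℝ => t⁻¹ * (q t - q 0)) (𝓝[>] 0)
      (𝓝 (-(L v) * ∫ u, ρ u)) := by
    have heq : (fun _ : ℝ => -(L v) * ∫ u, ρ u)
        =ᶠ[𝓝[>] (0:ℝ)] fun t : ℝ => t⁻¹ * (q t - q 0) := by
      filter_upwards [self_mem_nhdsWithin] with t (ht : t ∈ Set.Ioi (0:ℝ))
      rw [claim1 t]
      have ht' : (t:ℝ) ≠ 0 := ne_of_gt ht
      field_simp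
      ring
    exact tendsto_const_nhds.congr' heq
  exact tendsto_nhds_unique claim2 claim3

end AuxProofs3

section AuxProofs4

open Filter MeasureTheory Metric

variable {d : ℕ}

lemma fderiv_kernel {ρ : Ed d → ℝ} (hρd : Differentiable ℝ ρ) (x yy vv : Ed d) {ε : ℝ}
    (hε : 0 < ε) :
    fderiv ℝ (fun z : Ed d => ε ^ (-(d:ℤ)) * ρ (ε⁻¹ • (x - z))) yy vv
      = -(ε ^ (-(d:ℤ)) * ε⁻¹ * fderiv ℝ ρ (ε⁻¹ • (x - yy)) vv) := by
  have h1 : HasFDerivAt (fun z : Ed d => x - z)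
      (-(ContinuousLinearMap.id ℝ (Ed d))) yy := (hasFDerivAt_id yy).const_sub x
  have hL : HasFDerivAt (fun z : Ed d => ε⁻¹ • (x - z))
      (ε⁻¹ • -(ContinuousLinearMap.id ℝ (Ed d))) yy := h1.const_smul ε⁻¹
  have hcomp : HasFDerivAt (fun z : Ed d => ρ (ε⁻¹ • (x - z)))
      ((fderiv ℝ ρ (ε⁻¹ • (x - yy))).comp (ε⁻¹ • -(ContinuousLinearMap.id ℝ (Ed d)))) yy :=
    (hρd.differentiableAt.hasFDerivAt).comp yy hL
  have hmul := hcomp.const_mul (ε ^ (-(d:ℤ)))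
  rw [hmul.fderiv]
  simp only [ContinuousLinearMap.coe_smul', Pi.smul_apply, ContinuousLinearMap.coe_comp',
    Function.comp_apply, ContinuousLinearMap.neg_apply, ContinuousLinearMap.coe_id', id_eq,
    ContinuousLinearMap.smul_apply, smul_eq_mul]
  rw [show (fderiv ℝ ρ (ε⁻¹ • (x - yy))) (ε⁻¹ • -vv)
      = ε⁻¹ • (fderiv ℝ ρ (ε⁻¹ • (x - yy))) (-vv) from _root_.map_smul _ _ _,
    show (fderiv ℝ ρ (ε⁻¹ • (x - yy))) (-vv)
      = -((fderiv ℝ ρ (ε⁻¹ • (x - yy))) vv) from _root_.map_neg _ _]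
  simp only [smul_eq_mul]
  ring

lemma A_bound {f ρ : Ed d → ℝ} (hfc : Continuous f) (hρ : IsTestFunction ρ)
    (hsup : tsupport ρ ⊆ Metric.ball 0 1)
    {M : ℝ} {p : Ed d} (hM : ∀ z ∈ Metric.closedBall p 2, |f z| ≤ M)
    {ε : ℝ} (hε : ε ∈ Set.Ioc (0:ℝ) 1) {x : Ed d} (hx : x ∈ Metric.closedBall p 1) :
    |∫ u', f (x - ε • u') * ρ u'| ≤ M * ∫ u', |ρ u'| := by
  have hρc : Continuous ρ := hρ.1.continuous
  have hbint : Integrable (fun u' : Ed d => M * |ρ u'|) :=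
    ((hρc.abs).integrable_of_hasCompactSupport hρ.2.abs).const_mul M
  have hae : ∀ᵐ u' : Ed d ∂volume, ‖f (x - ε • u') * ρ u'‖ ≤ M * |ρ u'| := by
    filter_upwards with u'
    by_cases hu' : u' ∈ tsupport ρ
    · have hun : ‖u'‖ < 1 := by simpa using hsup hu'
      have harg : x - ε • u' ∈ Metric.closedBall p 2 := by
        rw [Metric.mem_closedBall, dist_eq_norm]
        have he : x - ε • u' - p = (x - p) - ε • u' := by abel
        rw [he]
        have h1 : ‖x - p‖ ≤ 1 := by rw [← dist_eq_norm]; exact Metric.mem_closedBall.1 hx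
        have h2 : ‖ε • u'‖ ≤ 1 := by
          rw [norm_smul, Real.norm_eq_abs, abs_of_pos hε.1]
          nlinarith [hε.2, hun, norm_nonneg u', hε.1]
        calc ‖(x - p) - ε • u'‖ ≤ ‖x - p‖ + ‖ε • u'‖ := norm_sub_le _ _
          _ ≤ 2 := by linarith
      calc ‖f (x - ε • u') * ρ u'‖ = |f (x - ε • u')| * |ρ u'| := abs_mul _ _
        _ ≤ M * |ρ u'| := mul_le_mul_of_nonneg_right (hM _ harg) (abs_nonneg _)
    · simp [image_eq_zero_of_notMem_tsupport hu']
  have h := norm_integral_le_of_norm_le hbint hae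
  simpa [integral_const_mul] using h

lemma A_slope_tendsto {f ρ : Ed d → ℝ} (hfd : Differentiable ℝ f)
    (hf' : Continuous (fderiv ℝ f)) (hρ : IsTestFunction ρ)
    (hsup : tsupport ρ ⊆ Metric.ball 0 1) (hρ1 : (∫ u : Ed d, ρ u) = 1) (y u : Ed d) :
    Tendsto (fun ε : ℝ =>
        ε⁻¹ * ((∫ u', f (y + ε • u - ε • u') * ρ u') - ∫ u', f (y - ε • u') * ρ u'))
      (𝓝[>] 0) (𝓝 (fderiv ℝ f y u)) := by
  have hfc : Continuous f := hfd.continuous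
  have hρc : Continuous ρ := hρ.1.continuous
  obtain ⟨Kf, hKf0, hKf⟩ : ∃ K : ℝ, 0 ≤ K ∧
      ∀ z ∈ Metric.closedBall y (‖u‖ + 1), ‖fderiv ℝ f z‖ ≤ K := by
    obtain ⟨C, hC⟩ := (isCompact_closedBall y (‖u‖ + 1)).exists_bound_of_continuousOn
      hf'.continuousOn
    exact ⟨max C 0, le_max_right _ _, fun z hz => (hC z hz).trans (le_max_left _ _)⟩
  have hbint : Integrable (fun u' : Ed d => Kf * ‖u‖ * |ρ u'|) :=
    ((hρc.abs).integrable_of_hasCompactSupport hρ.2.abs).const_mul _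
  have heq : (fun ε : ℝ =>
      ε⁻¹ * ((∫ u', f (y + ε • u - ε • u') * ρ u') - ∫ u', f (y - ε • u') * ρ u'))
      =ᶠ[𝓝[>] (0:ℝ)]
      fun ε => ∫ u', (ε⁻¹ * (f (y + ε • u - ε • u') - f (y - ε • u'))) * ρ u' := by
    filter_upwards [self_mem_nhdsWithin] with ε (hε : ε ∈ Set.Ioi (0:ℝ))
    have hi1 : Integrable (fun u' : Ed d => f (y + ε • u - ε • u') * ρ u') :=
      ((hfc.comp (continuous_const.sub (continuous_const_smul ε))).mul
        hρc).integrable_of_hasCompactSupport hρ.2.mul_left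
    have hi2 : Integrable (fun u' : Ed d => f (y - ε • u') * ρ u') :=
      ((hfc.comp (continuous_const.sub (continuous_const_smul ε))).mul
        hρc).integrable_of_hasCompactSupport hρ.2.mul_left
    rw [← integral_sub hi1 hi2, ← integral_const_mul]
    congr 1; funext u'; ring
  have key := tendsto_integral_filter_of_dominated_convergence
    (μ := (volume : Measure (Ed d))) (l := 𝓝[>] (0:ℝ))
    (F := fun ε u' => (ε⁻¹ * (f (y + ε • u - ε • u') - f (y - ε • u'))) * ρ u')
    (f := fun u' => fderiv ℝ f y u * ρ u')
    (fun u' : Ed d => Kf * ‖u‖ * |ρ u'|) ?_ ?_ hbint ?_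
  · have hval : (∫ u' : Ed d, fderiv ℝ f y u * ρ u') = fderiv ℝ f y u := by
      rw [integral_const_mul, hρ1, mul_one]
    rw [← hval]
    exact key.congr' heq.symm
  · filter_upwards with ε
    exact ((continuous_const.mul ((hfc.comp (continuous_const.sub (continuous_const_smul ε))).sub
      (hfc.comp (continuous_const.sub (continuous_const_smul ε))))).mul hρc).aestronglyMeasurable
  · filter_upwards [Ioc_mem_nhdsGT_of_mem (Set.mem_Ico.2 ⟨le_refl (0:ℝ), zero_lt_one⟩)]
      with ε hε
    filter_upwards with u'
    by_cases hu' : u' ∈ tsupport ρ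
    · have hun : ‖u'‖ < 1 := by simpa using hsup hu'
      have hp1 : y + ε • u - ε • u' ∈ Metric.closedBall y (‖u‖ + 1) := by
        rw [Metric.mem_closedBall, dist_eq_norm]
        have he : y + ε • u - ε • u' - y = ε • (u - u') := by rw [smul_sub]; abel
        rw [he, norm_smul, Real.norm_eq_abs, abs_of_pos hε.1]
        have h3 : ‖u - u'‖ ≤ ‖u‖ + 1 := by
          calc ‖u - u'‖ ≤ ‖u‖ + ‖u'‖ := norm_sub_le _ _
            _ ≤ ‖u‖ + 1 := by linarith
        nlinarith [hε.1, hε.2, norm_nonneg (u - u')]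
      have hp2 : y - ε • u' ∈ Metric.closedBall y (‖u‖ + 1) := by
        rw [Metric.mem_closedBall, dist_eq_norm]
        have he : y - ε • u' - y = -(ε • u') := by abel
        rw [he, norm_neg, norm_smul, Real.norm_eq_abs, abs_of_pos hε.1]
        nlinarith [hε.1, hε.2, hun, norm_nonneg u', norm_nonneg u]
      have hdiff : |f (y + ε • u - ε • u') - f (y - ε • u')| ≤ Kf * (ε * ‖u‖) := by
        have h := Convex.norm_image_sub_le_of_norm_fderiv_le
          (f := f) (C := Kf) (s := Metric.closedBall y (‖u‖ + 1))
          (fun z _ => hfd.differentiableAt) (fun z hz => hKf z hz)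
          (convex_closedBall _ _) hp2 hp1
        have he : (y + ε • u - ε • u') - (y - ε • u') = ε • u := by abel
        rw [he, norm_smul, Real.norm_eq_abs, Real.norm_eq_abs, abs_of_pos hε.1] at h
        simpa [Real.norm_eq_abs] using h
      have hquot : |ε⁻¹ * (f (y + ε • u - ε • u') - f (y - ε • u'))| ≤ Kf * ‖u‖ := by
        rw [abs_mul, abs_of_pos (inv_pos.2 hε.1)]
        have h2 : ε⁻¹ * |f (y + ε • u - ε • u') - f (y - ε • u')| ≤ ε⁻¹ * (Kf * (ε * ‖u‖)) :=
          mul_le_mul_of_nonneg_left hdiff (inv_pos.2 hε.1).le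
        have h3 : ε⁻¹ * (Kf * (ε * ‖u‖)) = Kf * ‖u‖ := by
          rw [show ε⁻¹ * (Kf * (ε * ‖u‖)) = (ε⁻¹ * ε) * (Kf * ‖u‖) by ring,
            inv_mul_cancel₀ hε.1.ne', one_mul]
        linarith
      calc ‖(ε⁻¹ * (f (y + ε • u - ε • u') - f (y - ε • u'))) * ρ u'‖
          = |ε⁻¹ * (f (y + ε • u - ε • u') - f (y - ε • u'))| * |ρ u'| := abs_mul _ _
        _ ≤ Kf * ‖u‖ * |ρ u'| := mul_le_mul_of_nonneg_right hquot (abs_nonneg _)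
    · simp [image_eq_zero_of_notMem_tsupport hu']
  · filter_upwards with u'
    have h1 : Tendsto (fun ε : ℝ => ε⁻¹ * (f (y + ε • (u - u')) - f y)) (𝓝[>] 0)
        (𝓝 (fderiv ℝ f y (u - u'))) := tendsto_slope_dir hfd.differentiableAt (u - u')
    have h2 : Tendsto (fun ε : ℝ => ε⁻¹ * (f (y + ε • (-u')) - f y)) (𝓝[>] 0)
        (𝓝 (fderiv ℝ f y (-u'))) := tendsto_slope_dir hfd.differentiableAt (-u')
    have h3 := (h1.sub h2).mul (tendsto_const_nhds (x := ρ u'))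
    have hval : (fderiv ℝ f y (u - u') - fderiv ℝ f y (-u')) * ρ u'
        = fderiv ℝ f y u * ρ u' := by
      rw [map_sub, map_neg]; ring
    rw [hval] at h3
    refine h3.congr fun ε => ?_
    have ha : y + ε • (u - u') = y + ε • u - ε • u' := by rw [smul_sub]; abel
    have hb : y + ε • (-u') = y - ε • u' := by rw [smul_neg]; abel
    rw [ha, hb]
    ring
end AuxProofs4

set_option maxHeartbeats 2000000 in
open Filter MeasureTheory Metric in
/-- for `d > 2`, `f ∈ C^d(ℝ^d)` with `singsupp f = {0, y}` and
`g = δ₀ + δ_y^{(1)} ∈ C^{-d-1}(ℝ^d)`, the canonical product `f·g` exists. -/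
theorem product_dirac_plus_dirac_derivative
    (d : ℕ) (hd : 2 < d)
    (f : Ed d → ℝ) (hf : HolderFunLoc (d : ℝ) f)
    (y : Ed d) (hy : y ≠ 0) (hss : funSingSupp f = {0, y})
    (F : Distr d) (hF : ∀ ψ, IsTestFunction ψ → F ψ = ∫ x, f x * ψ x)
    (v : Ed d) (hv : v ≠ 0)
    (g : Distr d)
    (hg : ∀ ψ : Ed d → ℝ, IsTestFunction ψ → g ψ = ψ 0 - fderiv ℝ ψ y v)
    (hgC : HolderDistOn g (-(d : ℝ) - 1)) :
    ∃ w : Distr d, IsCanonicalProduct F g w := by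
  classical
  -- basic regularity of f
  have hge1 : 1 ≤ (lfloor (d:ℝ)).toNat := by
    unfold lfloor
    rw [Int.ceil_natCast]
    omega
  have hcast : (1 : WithTop ℕ∞) ≤ (((lfloor (d:ℝ)).toNat : ℕ∞) : WithTop ℕ∞) := by
    exact_mod_cast hge1
  have hf1 : ContDiff ℝ 1 f := hf.1.of_le hcast
  have hfc : Continuous f := hf1.continuous
  have hfd : Differentiable ℝ f := hf1.differentiable one_ne_zero
  have hf'c : Continuous (fderiv ℝ f) := hf.1.continuous_fderiv (lt_of_lt_of_le zero_lt_one hcast).ne'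
  -- construction of the product distribution w
  obtain ⟨w, hw⟩ : ∃ w : Distr d, ∀ φ : Ed d → ℝ, DifferentiableAt ℝ φ y →
      w φ = f 0 * φ 0 - (f y * fderiv ℝ φ y v + φ y * fderiv ℝ f y v) := by
    let V : Submodule ℝ (Ed d → ℝ) :=
      { carrier := {φ | DifferentiableAt ℝ φ y}
        add_mem' := fun h1 h2 => h1.add h2
        zero_mem' := differentiableAt_const 0
        smul_mem' := fun c φ h => h.const_smul c }
    let w₀ : V →ₗ[ℝ] ℝ :=
      { toFun := fun φ =>
          f 0 * (φ : Ed d → ℝ) 0 - (f y * fderiv ℝ (φ : Ed d → ℝ) y v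
            + (φ : Ed d → ℝ) y * fderiv ℝ f y v)
        map_add' := by
          rintro φ₁ φ₂
          have hd1 : fderiv ℝ ((φ₁ : Ed d → ℝ) + (φ₂ : Ed d → ℝ)) y
              = fderiv ℝ (φ₁ : Ed d → ℝ) y + fderiv ℝ (φ₂ : Ed d → ℝ) y := by
            exact fderiv_add φ₁.2 φ₂.2
          simp only [Submodule.coe_add, Pi.add_apply, hd1, ContinuousLinearMap.add_apply]
          ring
        map_smul' := by
          rintro c φ
          have hd1 : fderiv ℝ (c • (φ : Ed d → ℝ)) y = c • fderiv ℝ (φ : Ed d → ℝ) y := by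
            exact fderiv_const_smul φ.2 c
          simp only [SetLike.val_smul, Pi.smul_apply, hd1, ContinuousLinearMap.smul_apply,
            smul_eq_mul, RingHom.id_apply]
          ring }
    obtain ⟨Q, hQ⟩ := Submodule.exists_isCompl V
    refine ⟨w₀.comp (V.linearProjOfIsCompl Q hQ), fun φ hφ => ?_⟩
    have hmem : φ ∈ V := hφ
    have h2 : (V.linearProjOfIsCompl Q hQ) φ = ⟨φ, hmem⟩ :=
      Submodule.linearProjOfIsCompl_apply_left hQ ⟨φ, hmem⟩
    rw [LinearMap.comp_apply, h2]
    rfl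
  refine ⟨w, ?_⟩
  intro ρ hρm ψ hψ
  obtain ⟨hρt, hsupρ, hρ1⟩ := hρm
  have hρc : Continuous ρ := hρt.1.continuous
  have hρd : Differentiable ℝ ρ := hρt.1.differentiable one_le_top_coe
  have hψc : Continuous ψ := hψ.1.continuous
  have hψd : Differentiable ℝ ψ := hψ.1.differentiable one_le_top_coe
  have hψ'c : Continuous (fderiv ℝ ψ) := hψ.1.continuous_fderiv one_le_top_coe
  have hρ'c : Continuous fun u : Ed d => fderiv ℝ ρ u v :=
    (hρt.1.continuous_fderiv one_le_top_coe).clm_apply continuous_const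
  have hDρ0 : ∀ u : Ed d, u ∉ tsupport ρ → fderiv ℝ ρ u v = 0 := by
    intro u hu
    have : fderiv ℝ ρ u = 0 := by
      by_contra h
      exact hu (support_fderiv_subset ℝ (Function.mem_support.2 h))
    rw [this]; rfl
  have hDρcs : HasCompactSupport fun u : Ed d => fderiv ℝ ρ u v :=
    HasCompactSupport.intro hρt.2 hDρ0
  -- continuity of mollified f
  have hAcont : ∀ {ε : ℝ}, 0 < ε →
      Continuous fun x : Ed d => ∫ u', f (x - ε • u') * ρ u' :=
    fun hε => A_cont hfc hρt hsupρ hε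
  -- rewrite the target value
  rw [hw ψ hψd.differentiableAt]
  -- the two model integrals
  have hT1 : Tendsto (fun ε : ℝ =>
      ∫ u, (∫ u', f (ε • u - ε • u') * ρ u') * ψ (ε • u) * ρ u) (𝓝[>] 0)
      (𝓝 (f 0 * ψ 0)) := by
    obtain ⟨M, hM0, hM⟩ := exists_bound_on_closedBall hfc 0 2
    obtain ⟨Mψ, hMψ0, hMψ⟩ := exists_bound_of_hasCompactSupport hψc hψ.2
    have hIρint : Integrable (fun u : Ed d => |ρ u|) :=
      (hρc.abs).integrable_of_hasCompactSupport hρt.2.abs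
    have hIρ0 : 0 ≤ ∫ u : Ed d, |ρ u| := integral_nonneg fun u => abs_nonneg _
    have hbint : Integrable (fun u : Ed d => (M * (∫ u' : Ed d, |ρ u'|) * Mψ) * |ρ u|) :=
      hIρint.const_mul _
    have key := tendsto_integral_filter_of_dominated_convergence
      (μ := (volume : Measure (Ed d))) (l := 𝓝[>] (0:ℝ))
      (F := fun ε u => (∫ u', f (ε • u - ε • u') * ρ u') * ψ (ε • u) * ρ u)
      (f := fun u => f 0 * ψ 0 * ρ u)
      (fun u : Ed d => (M * (∫ u' : Ed d, |ρ u'|) * Mψ) * |ρ u|) ?_ ?_ hbint ?_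
    · have hval : (∫ u : Ed d, f 0 * ψ 0 * ρ u) = f 0 * ψ 0 := by
        rw [show (fun u : Ed d => f 0 * ψ 0 * ρ u) = fun u => (f 0 * ψ 0) * ρ u by
          funext u; ring]
        rw [integral_const_mul, hρ1, mul_one]
      rw [← hval]
      exact key
    · filter_upwards [self_mem_nhdsWithin] with ε (hε : ε ∈ Set.Ioi (0:ℝ))
      exact ((((hAcont hε).comp (continuous_const_smul ε)).mul
        (hψc.comp (continuous_const_smul ε))).mul hρc).aestronglyMeasurable
    · filter_upwards [Ioc_mem_nhdsGT_of_mem (Set.mem_Ico.2 ⟨le_refl (0:ℝ), zero_lt_one⟩)]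
        with ε hε
      filter_upwards with u
      by_cases hu : u ∈ tsupport ρ
      · have hun : ‖u‖ < 1 := by simpa using hsupρ hu
        have hx : ε • u ∈ Metric.closedBall (0 : Ed d) 1 := by
          rw [Metric.mem_closedBall, dist_zero_right, norm_smul, Real.norm_eq_abs,
            abs_of_pos hε.1]
          nlinarith [hε.1, hε.2, norm_nonneg u]
        have hAb : |∫ u', f (ε • u - ε • u') * ρ u'| ≤ M * ∫ u' : Ed d, |ρ u'| :=
          A_bound hfc hρt hsupρ hM hε hx
        calc ‖(∫ u', f (ε • u - ε • u') * ρ u') * ψ (ε • u) * ρ u‖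
            = |∫ u', f (ε • u - ε • u') * ρ u'| * |ψ (ε • u)| * |ρ u| := by
              rw [Real.norm_eq_abs, abs_mul, abs_mul]
          _ ≤ (M * ∫ u' : Ed d, |ρ u'|) * Mψ * |ρ u| := by
              have h1 : |ψ (ε • u)| ≤ Mψ := by
                have := hMψ (ε • u); rwa [Real.norm_eq_abs] at this
              have h2 : (0:ℝ) ≤ |∫ u', f (ε • u - ε • u') * ρ u'| := abs_nonneg _
              have h3 : (0:ℝ) ≤ |ψ (ε • u)| := abs_nonneg _
              have h4 : (0:ℝ) ≤ |ρ u| := abs_nonneg _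
              have h5 : (0:ℝ) ≤ M * ∫ u' : Ed d, |ρ u'| := le_trans h2 hAb
              exact mul_le_mul (mul_le_mul hAb h1 h3 h5) le_rfl h4 (by positivity)
          _ = M * (∫ u' : Ed d, |ρ u'|) * Mψ * |ρ u| := by ring
      · simp [image_eq_zero_of_notMem_tsupport hu]
    · filter_upwards with u
      have hA1 := A_tendsto hfc hρt hsupρ 0 u
      simp only [zero_add] at hA1
      rw [hρ1, mul_one] at hA1
      have hψ1 : Tendsto (fun ε : ℝ => ψ (ε • u)) (𝓝[>] 0) (𝓝 (ψ 0)) := by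
        have hc : Continuous fun ε : ℝ => ψ (ε • u) :=
          hψc.comp (continuous_id.smul continuous_const)
        have := hc.tendsto (0:ℝ)
        rw [show (0:ℝ) • u = 0 from zero_smul _ _] at this
        exact this.mono_left nhdsWithin_le_nhds
      exact (hA1.mul hψ1).mul tendsto_const_nhds
  have hT2 : Tendsto (fun ε : ℝ =>
      ∫ u, (ε⁻¹ * ((∫ u', f (y + ε • u - ε • u') * ρ u') * ψ (y + ε • u)
        - (∫ u', f (y - ε • u') * ρ u') * ψ y)) * fderiv ℝ ρ u v) (𝓝[>] 0)
      (𝓝 (-(f y * fderiv ℝ ψ y v + ψ y * fderiv ℝ f y v))) := by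
    obtain ⟨My, hMy0, hMy⟩ := exists_bound_on_closedBall hfc y 2
    obtain ⟨Kψ, hKψ0, hKψ⟩ := exists_bound_of_hasCompactSupport hψ'c (hψ.2.fderiv ℝ)
    obtain ⟨Ky, hKy0, hKy⟩ : ∃ K : ℝ, 0 ≤ K ∧
        ∀ z ∈ Metric.closedBall y 2, ‖fderiv ℝ f z‖ ≤ K := by
      obtain ⟨C, hC⟩ := (isCompact_closedBall y 2).exists_bound_of_continuousOn
        hf'c.continuousOn
      exact ⟨max C 0, le_max_right _ _, fun z hz => (hC z hz).trans (le_max_left _ _)⟩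
    have hIρint : Integrable (fun u : Ed d => |ρ u|) :=
      (hρc.abs).integrable_of_hasCompactSupport hρt.2.abs
    have hIρ0 : 0 ≤ ∫ u : Ed d, |ρ u| := integral_nonneg fun u => abs_nonneg _
    set CG : ℝ := Kψ * (My * ∫ u' : Ed d, |ρ u'|) + |ψ y| * (Ky * ∫ u' : Ed d, |ρ u'|)
      with hCG
    have hbint : Integrable (fun u : Ed d => CG * |fderiv ℝ ρ u v|) :=
      ((hρ'c.abs).integrable_of_hasCompactSupport hDρcs.abs).const_mul _
    have key := tendsto_integral_filter_of_dominated_convergence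
      (μ := (volume : Measure (Ed d))) (l := 𝓝[>] (0:ℝ))
      (F := fun ε u => (ε⁻¹ * ((∫ u', f (y + ε • u - ε • u') * ρ u') * ψ (y + ε • u)
        - (∫ u', f (y - ε • u') * ρ u') * ψ y)) * fderiv ℝ ρ u v)
      (f := fun u => (fderiv ℝ ψ y u * f y + ψ y * fderiv ℝ f y u) * fderiv ℝ ρ u v)
      (fun u : Ed d => CG * |fderiv ℝ ρ u v|) ?_ ?_ hbint ?_
    · have hLL : (∫ u, (fderiv ℝ ψ y u * f y + ψ y * fderiv ℝ f y u) * fderiv ℝ ρ u v)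
          = -(f y * fderiv ℝ ψ y v + ψ y * fderiv ℝ f y v) := by
        have h6 := integral_affine_mul_fderiv hρt 0
          (f y • fderiv ℝ ψ y + ψ y • fderiv ℝ f y) v
        have h7 : ∀ u : Ed d, ((0:ℝ) + (f y • fderiv ℝ ψ y + ψ y • fderiv ℝ f y) u)
            = fderiv ℝ ψ y u * f y + ψ y * fderiv ℝ f y u := by
          intro u
          simp only [ContinuousLinearMap.add_apply, ContinuousLinearMap.coe_smul',
            Pi.smul_apply, smul_eq_mul, zero_add]
          ring
        have h8 : ((f y • fderiv ℝ ψ y + ψ y • fderiv ℝ f y) v)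
            = f y * fderiv ℝ ψ y v + ψ y * fderiv ℝ f y v := by
          simp only [ContinuousLinearMap.add_apply, ContinuousLinearMap.coe_smul',
            Pi.smul_apply, smul_eq_mul]
        rw [show (fun u : Ed d => (fderiv ℝ ψ y u * f y + ψ y * fderiv ℝ f y u)
            * fderiv ℝ ρ u v)
          = fun u : Ed d => ((0:ℝ) + (f y • fderiv ℝ ψ y + ψ y • fderiv ℝ f y) u)
            * fderiv ℝ ρ u v by funext u; rw [h7]]
        rw [h6, h8, hρ1, mul_one]
      rw [← hLL]
      exact key
    · filter_upwards [self_mem_nhdsWithin] with ε (hε : ε ∈ Set.Ioi (0:ℝ))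
      have hc1 : Continuous fun u : Ed d => ∫ u', f (y + ε • u - ε • u') * ρ u' :=
        (hAcont hε).comp (continuous_const.add (continuous_const_smul ε))
      have hc2 : Continuous fun u : Ed d => ψ (y + ε • u) :=
        hψc.comp (continuous_const.add (continuous_const_smul ε))
      exact ((continuous_const.mul ((hc1.mul hc2).sub
        (continuous_const.mul continuous_const))).mul hρ'c).aestronglyMeasurable
    · filter_upwards [Ioc_mem_nhdsGT_of_mem (Set.mem_Ico.2 ⟨le_refl (0:ℝ), zero_lt_one⟩)]
        with ε hε
      filter_upwards with u
      by_cases hu : u ∈ tsupport ρ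
      · have hun : ‖u‖ < 1 := by simpa using hsupρ hu
        have hx1 : y + ε • u ∈ Metric.closedBall y 1 := by
          rw [Metric.mem_closedBall, dist_eq_norm]
          have he : y + ε • u - y = ε • u := by abel
          rw [he, norm_smul, Real.norm_eq_abs, abs_of_pos hε.1]
          nlinarith [hε.1, hε.2, norm_nonneg u]
        have hx2 : y ∈ Metric.closedBall y 1 := Metric.mem_closedBall_self zero_le_one
        -- bound on the slope of ψ
        have hsψ : |ε⁻¹ * (ψ (y + ε • u) - ψ y)| ≤ Kψ := by
          have h := Convex.norm_image_sub_le_of_norm_fderiv_le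
            (f := ψ) (C := Kψ) (s := (Set.univ : Set (Ed d)))
            (fun z _ => hψd.differentiableAt) (fun z _ => hKψ z) convex_univ
            (Set.mem_univ y) (Set.mem_univ (y + ε • u))
          have he : y + ε • u - y = ε • u := by abel
          rw [he, norm_smul, Real.norm_eq_abs, Real.norm_eq_abs, abs_of_pos hε.1] at h
          rw [abs_mul, abs_of_pos (inv_pos.2 hε.1)]
          have h2 : ε⁻¹ * |ψ (y + ε • u) - ψ y| ≤ ε⁻¹ * (Kψ * (ε * ‖u‖)) :=
            mul_le_mul_of_nonneg_left (by linarith) (inv_pos.2 hε.1).le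
          have h3 : ε⁻¹ * (Kψ * (ε * ‖u‖)) = Kψ * ‖u‖ := by
            rw [show ε⁻¹ * (Kψ * (ε * ‖u‖)) = (ε⁻¹ * ε) * (Kψ * ‖u‖) by ring,
              inv_mul_cancel₀ hε.1.ne', one_mul]
          have h4 : Kψ * ‖u‖ ≤ Kψ := by nlinarith [hun, norm_nonneg u]
          linarith
        -- bound on the mollification at y + ε u
        have hAb : |∫ u', f (y + ε • u - ε • u') * ρ u'| ≤ My * ∫ u' : Ed d, |ρ u'| := by
          have := A_bound hfc hρt hsupρ hMy hε hx1
          simpa using this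
        -- bound on the slope of the mollification
        have hsA : |ε⁻¹ * ((∫ u', f (y + ε • u - ε • u') * ρ u')
            - ∫ u', f (y - ε • u') * ρ u')| ≤ Ky * ∫ u' : Ed d, |ρ u'| := by
          have hi1 : Integrable (fun u' : Ed d => f (y + ε • u - ε • u') * ρ u') :=
            ((hfc.comp (continuous_const.sub (continuous_const_smul ε))).mul
              hρc).integrable_of_hasCompactSupport hρt.2.mul_left
          have hi2 : Integrable (fun u' : Ed d => f (y - ε • u') * ρ u') :=
            ((hfc.comp (continuous_const.sub (continuous_const_smul ε))).mul
              hρc).integrable_of_hasCompactSupport hρt.2.mul_left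
          have hbb : Integrable (fun u' : Ed d => (Ky * ε * ‖u‖) * |ρ u'|) :=
            hIρint.const_mul _
          have hdi : ((∫ u', f (y + ε • u - ε • u') * ρ u') - ∫ u', f (y - ε • u') * ρ u')
              = ∫ u', (f (y + ε • u - ε • u') - f (y - ε • u')) * ρ u' := by
            rw [← integral_sub hi1 hi2]
            congr 1; funext u'; ring
          have hae : ∀ᵐ u' : Ed d ∂volume,
              ‖(f (y + ε • u - ε • u') - f (y - ε • u')) * ρ u'‖ ≤ (Ky * ε * ‖u‖) * |ρ u'| := by
            filter_upwards with u'
            by_cases hu' : u' ∈ tsupport ρ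
            · have hun' : ‖u'‖ < 1 := by simpa using hsupρ hu'
              have hp1 : y + ε • u - ε • u' ∈ Metric.closedBall y 2 := by
                rw [Metric.mem_closedBall, dist_eq_norm]
                have he : y + ε • u - ε • u' - y = ε • (u - u') := by rw [smul_sub]; abel
                rw [he, norm_smul, Real.norm_eq_abs, abs_of_pos hε.1]
                have h3 : ‖u - u'‖ ≤ 2 := by
                  calc ‖u - u'‖ ≤ ‖u‖ + ‖u'‖ := norm_sub_le _ _
                    _ ≤ 2 := by linarith
                nlinarith [hε.1, hε.2, norm_nonneg (u - u')]
              have hp2 : y - ε • u' ∈ Metric.closedBall y 2 := by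
                rw [Metric.mem_closedBall, dist_eq_norm]
                have he : y - ε • u' - y = -(ε • u') := by abel
                rw [he, norm_neg, norm_smul, Real.norm_eq_abs, abs_of_pos hε.1]
                nlinarith [hε.1, hε.2, hun', norm_nonneg u']
              have h := Convex.norm_image_sub_le_of_norm_fderiv_le
                (f := f) (C := Ky) (s := Metric.closedBall y 2)
                (fun z _ => hfd.differentiableAt) (fun z hz => hKy z hz)
                (convex_closedBall _ _) hp2 hp1
              have he : (y + ε • u - ε • u') - (y - ε • u') = ε • u := by abel
              rw [he, norm_smul, Real.norm_eq_abs, Real.norm_eq_abs, abs_of_pos hε.1] at h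
              calc ‖(f (y + ε • u - ε • u') - f (y - ε • u')) * ρ u'‖
                  = |f (y + ε • u - ε • u') - f (y - ε • u')| * |ρ u'| := abs_mul _ _
                _ ≤ (Ky * ε * ‖u‖) * |ρ u'| := by
                    apply mul_le_mul_of_nonneg_right _ (abs_nonneg _)
                    calc |f (y + ε • u - ε • u') - f (y - ε • u')| ≤ Ky * (ε * ‖u‖) := h
                      _ = Ky * ε * ‖u‖ := by ring
            · simp [image_eq_zero_of_notMem_tsupport hu']
          have h9 := norm_integral_le_of_norm_le hbb hae
          rw [hdi, abs_mul, abs_of_pos (inv_pos.2 hε.1)]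
          rw [Real.norm_eq_abs] at h9
          have h10 : (∫ u' : Ed d, (Ky * ε * ‖u‖) * |ρ u'|)
              = Ky * ε * ‖u‖ * ∫ u' : Ed d, |ρ u'| := integral_const_mul _ _
          rw [h10] at h9
          have h11 : ε⁻¹ * |∫ u', (f (y + ε • u - ε • u') - f (y - ε • u')) * ρ u'|
              ≤ ε⁻¹ * (Ky * ε * ‖u‖ * ∫ u' : Ed d, |ρ u'|) :=
            mul_le_mul_of_nonneg_left h9 (inv_pos.2 hε.1).le
          have h12 : ε⁻¹ * (Ky * ε * ‖u‖ * ∫ u' : Ed d, |ρ u'|)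
              = (ε⁻¹ * ε) * (Ky * ‖u‖ * ∫ u' : Ed d, |ρ u'|) := by ring
          rw [h12, inv_mul_cancel₀ hε.1.ne', one_mul] at h11
          have h13 : Ky * ‖u‖ * (∫ u' : Ed d, |ρ u'|) ≤ Ky * (∫ u' : Ed d, |ρ u'|) := by
            nlinarith [mul_nonneg hKy0 hIρ0, hun, norm_nonneg u, hIρ0, hKy0]
          linarith
        -- combine
        have hiden : ε⁻¹ * ((∫ u', f (y + ε • u - ε • u') * ρ u') * ψ (y + ε • u)
              - (∫ u', f (y - ε • u') * ρ u') * ψ y)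
            = (ε⁻¹ * (ψ (y + ε • u) - ψ y)) * (∫ u', f (y + ε • u - ε • u') * ρ u')
              + ψ y * (ε⁻¹ * ((∫ u', f (y + ε • u - ε • u') * ρ u')
                - ∫ u', f (y - ε • u') * ρ u')) := by ring
        calc ‖(ε⁻¹ * ((∫ u', f (y + ε • u - ε • u') * ρ u') * ψ (y + ε • u)
              - (∫ u', f (y - ε • u') * ρ u') * ψ y)) * fderiv ℝ ρ u v‖
            = |ε⁻¹ * ((∫ u', f (y + ε • u - ε • u') * ρ u') * ψ (y + ε • u)
              - (∫ u', f (y - ε • u') * ρ u') * ψ y)| * |fderiv ℝ ρ u v| := abs_mul _ _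
          _ ≤ CG * |fderiv ℝ ρ u v| := by
              apply mul_le_mul_of_nonneg_right _ (abs_nonneg _)
              rw [hiden, hCG]
              have e1 : |(ε⁻¹ * (ψ (y + ε • u) - ψ y)) * (∫ u', f (y + ε • u - ε • u') * ρ u')|
                  ≤ Kψ * (My * ∫ u' : Ed d, |ρ u'|) := by
                rw [abs_mul]
                have hb1 : (0:ℝ) ≤ |∫ u', f (y + ε • u - ε • u') * ρ u'| := abs_nonneg _
                exact mul_le_mul hsψ hAb hb1 hKψ0
              have e2 : |ψ y * (ε⁻¹ * ((∫ u', f (y + ε • u - ε • u') * ρ u')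
                    - ∫ u', f (y - ε • u') * ρ u'))|
                  ≤ |ψ y| * (Ky * ∫ u' : Ed d, |ρ u'|) := by
                rw [abs_mul]
                exact mul_le_mul_of_nonneg_left hsA (abs_nonneg _)
              exact (abs_add_le _ _).trans (add_le_add e1 e2)
      · have h0 := hDρ0 u hu
        simp [h0]
    · filter_upwards with u
      have ta := tendsto_slope_dir (p := y) hψd.differentiableAt u
      have tb := A_tendsto hfc hρt hsupρ y u
      rw [hρ1, mul_one] at tb
      have tc := A_slope_tendsto hfd hf'c hρt hsupρ hρ1 y u
      have tfull := ((ta.mul tb).add ((tendsto_const_nhds (x := ψ y)).mul tc)).mul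
        (tendsto_const_nhds (x := fderiv ℝ ρ u v))
      refine tfull.congr fun ε => ?_
      ring
  -- eventual identification of the mollified integrals
  have hE : (fun ε : ℝ => ∫ x, mollifyAt F ρ ε x * mollifyAt g ρ ε x * ψ x)
      =ᶠ[𝓝[>] (0:ℝ)]
      fun ε => (∫ u, (∫ u', f (ε • u - ε • u') * ρ u') * ψ (ε • u) * ρ u)
        + ∫ u, (ε⁻¹ * ((∫ u', f (y + ε • u - ε • u') * ρ u') * ψ (y + ε • u)
          - (∫ u', f (y - ε • u') * ρ u') * ψ y)) * fderiv ℝ ρ u v := by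
    filter_upwards [self_mem_nhdsWithin] with ε (hε : ε ∈ Set.Ioi (0:ℝ))
    have hε0 : (0:ℝ) < ε := hε
    have hεne : (ε:ℝ) ≠ 0 := hε0.ne'
    have hzp : (ε:ℝ) ^ (-(d:ℤ)) = (ε ^ d)⁻¹ := by rw [zpow_neg, zpow_natCast]
    have hne : (ε:ℝ) ^ d ≠ 0 := (pow_pos hε0 d).ne'
    have hMF : ∀ x : Ed d, mollifyAt F ρ ε x = ∫ u', f (x - ε • u') * ρ u' := by
      intro x
      have h1 : mollifyAt F ρ ε x = F (fun z => ε ^ (-(d:ℤ)) * ρ (ε⁻¹ • (x - z))) := rfl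
      rw [h1, hF _ (isTestFunction_kernel hρt x hε0)]
      exact conv_change hε0 x
    have hMG : ∀ x : Ed d, mollifyAt g ρ ε x
        = ε ^ (-(d:ℤ)) * ρ (ε⁻¹ • x)
          + ε ^ (-(d:ℤ)) * ε⁻¹ * fderiv ℝ ρ (ε⁻¹ • (x - y)) v := by
      intro x
      have h1 : mollifyAt g ρ ε x = g (fun z => ε ^ (-(d:ℤ)) * ρ (ε⁻¹ • (x - z))) := rfl
      rw [h1, hg _ (isTestFunction_kernel hρt x hε0)]
      simp only [sub_zero]
      rw [fderiv_kernel hρd x y v hε0]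
      ring
    have hA := hAcont hε0
    have hk1c : Continuous fun x : Ed d => ε ^ (-(d:ℤ)) * ρ (ε⁻¹ • x) :=
      continuous_const.mul (hρc.comp (continuous_const_smul ε⁻¹))
    have hk2c : Continuous fun x : Ed d =>
        ε ^ (-(d:ℤ)) * ε⁻¹ * fderiv ℝ ρ (ε⁻¹ • (x - y)) v :=
      continuous_const.mul (((hρt.1.continuous_fderiv one_le_top_coe).comp
        (((continuous_id.sub continuous_const).const_smul ε⁻¹))).clm_apply continuous_const)
    have hint1 : Integrable (fun x : Ed d =>
        (∫ u', f (x - ε • u') * ρ u') * (ε ^ (-(d:ℤ)) * ρ (ε⁻¹ • x)) * ψ x) :=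
      (((hA.mul hk1c).mul hψc)).integrable_of_hasCompactSupport hψ.2.mul_left
    have hint2 : Integrable (fun x : Ed d =>
        (∫ u', f (x - ε • u') * ρ u')
          * (ε ^ (-(d:ℤ)) * ε⁻¹ * fderiv ℝ ρ (ε⁻¹ • (x - y)) v) * ψ x) :=
      (((hA.mul hk2c).mul hψc)).integrable_of_hasCompactSupport hψ.2.mul_left
    have hsplit : ∫ x, mollifyAt F ρ ε x * mollifyAt g ρ ε x * ψ x
        = (∫ x, (∫ u', f (x - ε • u') * ρ u') * (ε ^ (-(d:ℤ)) * ρ (ε⁻¹ • x)) * ψ x)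
          + ∫ x, (∫ u', f (x - ε • u') * ρ u')
              * (ε ^ (-(d:ℤ)) * ε⁻¹ * fderiv ℝ ρ (ε⁻¹ • (x - y)) v) * ψ x := by
      rw [← integral_add hint1 hint2]
      congr 1; funext x
      rw [hMF x, hMG x]; ring
    have hI1 : (∫ x, (∫ u', f (x - ε • u') * ρ u') * (ε ^ (-(d:ℤ)) * ρ (ε⁻¹ • x)) * ψ x)
        = ∫ u, (∫ u', f (ε • u - ε • u') * ρ u') * ψ (ε • u) * ρ u := by
      rw [integral_shift_scale hε0 (0 : Ed d)]
      congr 1; funext u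
      simp only [zero_add]
      rw [show ε⁻¹ • (ε • u) = u by rw [smul_smul, inv_mul_cancel₀ hεne, one_smul], hzp]
      field_simp
    have hI2 : (∫ x, (∫ u', f (x - ε • u') * ρ u')
          * (ε ^ (-(d:ℤ)) * ε⁻¹ * fderiv ℝ ρ (ε⁻¹ • (x - y)) v) * ψ x)
        = ∫ u, (ε⁻¹ * ((∫ u', f (y + ε • u - ε • u') * ρ u') * ψ (y + ε • u)))
            * fderiv ℝ ρ u v := by
      rw [integral_shift_scale hε0 y]
      congr 1; funext u
      rw [show ε⁻¹ • (y + ε • u - y) = u by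
        rw [show y + ε • u - y = ε • u by abel, smul_smul, inv_mul_cancel₀ hεne, one_smul]]
      rw [hzp]
      field_simp
    have h0int : (∫ u : Ed d, fderiv ℝ ρ u v) = 0 := by
      have h6 := integral_affine_mul_fderiv hρt 1 0 v
      simpa using h6
    have hconst : (∫ u, (ε⁻¹ * ((∫ u', f (y - ε • u') * ρ u') * ψ y)) * fderiv ℝ ρ u v)
        = 0 := by
      rw [integral_const_mul, h0int, mul_zero]
    have hintc : Integrable (fun u : Ed d =>
        (ε⁻¹ * ((∫ u', f (y + ε • u - ε • u') * ρ u') * ψ (y + ε • u)))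
          * fderiv ℝ ρ u v) := by
      refine Continuous.integrable_of_hasCompactSupport ?_ hDρcs.mul_left
      exact (continuous_const.mul ((hA.comp
        (continuous_const.add (continuous_const_smul ε))).mul
        (hψc.comp (continuous_const.add (continuous_const_smul ε))))).mul hρ'c
    have hintd : Integrable (fun u : Ed d =>
        (ε⁻¹ * ((∫ u', f (y - ε • u') * ρ u') * ψ y)) * fderiv ℝ ρ u v) :=
      (continuous_const.mul hρ'c).integrable_of_hasCompactSupport hDρcs.mul_left
    have hTT : (∫ u, (ε⁻¹ * ((∫ u', f (y + ε • u - ε • u') * ρ u') * ψ (y + ε • u)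
          - (∫ u', f (y - ε • u') * ρ u') * ψ y)) * fderiv ℝ ρ u v)
        = ∫ u, (ε⁻¹ * ((∫ u', f (y + ε • u - ε • u') * ρ u') * ψ (y + ε • u)))
            * fderiv ℝ ρ u v := by
      rw [show (fun u : Ed d => (ε⁻¹ * ((∫ u', f (y + ε • u - ε • u') * ρ u') * ψ (y + ε • u)
          - (∫ u', f (y - ε • u') * ρ u') * ψ y)) * fderiv ℝ ρ u v)
        = fun u : Ed d => (ε⁻¹ * ((∫ u', f (y + ε • u - ε • u') * ρ u') * ψ (y + ε • u)))
            * fderiv ℝ ρ u v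
          - (ε⁻¹ * ((∫ u', f (y - ε • u') * ρ u') * ψ y)) * fderiv ℝ ρ u v by
        funext u; ring]
      rw [integral_sub hintc hintd, hconst, sub_zero]
    rw [hsplit, hI1, hI2, hTT]
  have hsum := hT1.add hT2
  have hfin : Tendsto (fun ε : ℝ => ∫ x, mollifyAt F ρ ε x * mollifyAt g ρ ε x * ψ x)
      (𝓝[>] 0) (𝓝 (f 0 * ψ 0 + -(f y * fderiv ℝ ψ y v + ψ y * fderiv ℝ f y v))) :=
    hsum.congr' hE.symm
  simpa [sub_eq_add_neg] using hfin
end
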